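/- Parallel composition of typable g-choreographies with disjoint participants is defined: if Π1 ⊢ G1 : ⟨φ1,Λ1⟩ and Π2 ⊢ G2 : ⟨φ2,Λ2⟩ are derivable for ground g-choreographies G1, G2 and Π1 ∩ Π2 = ∅, then the label sets of ⟦G1⟧ and ⟦G2⟧ are disjoint, so ⟦G1|G2⟧ = ⟦G1⟧⊗⟦G2⟧ ≠ ⊥; moreover, for every participant A, the labels of the minimal events of ⟦G1|G2⟧↾A equal (φ1∪φ2)̂(A) and the labels of the maximal events of ⟦G1|G2⟧↾A equal (Λ1∪Λ2)̂(A). -/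

import Mathlib

open scoped Classical

namespace Choreo

/-! ## Labels -/

/-- Communication labels: output `A B!m` and input `A B?m`. -/
inductive Label (P M : Type) where
  | out : P → P → M → Label P M
  | inp : P → P → M → Label P M

variable {P M : Type}

/-- The subject of a label: the sender of an output, the receiver of an input. -/
def Label.sbj : Label P M → P
  | .out a _ _ => a
  | .inp _ b _ => b

/-- The set `L^!` of output labels (sender and receiver distinct). -/
def Lout : Set (Label P M) := {l | ∃ a b m, a ≠ b ∧ l = .out a b m}

/-- The set `L^?` of input labels (sender and receiver distinct). -/
def Lin : Set (Label P M) := {l | ∃ a b m, a ≠ b ∧ l = .inp a b m}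

/-- `L̂(A)`: the labels in `L` whose subject is `A`. -/
def hat (L : Set (Label P M)) (A : P) : Set (Label P M) := {l ∈ L | l.sbj = A}

/-- `sbj(L)`: the set of subjects of the labels in `L`. -/
def sbjSet (L : Set (Label P M)) : Set P := Label.sbj '' L

/-- `L − Π`: the labels in `L` whose subject is not in `Π`. -/
def lminus (L : Set (Label P M)) (Γ : Set P) : Set (Label P M) := {l ∈ L | l.sbj ∉ Γ}

/-! ## Labelled event structures (events drawn from ℕ) -/

/-- Data of a labelled (prime) event structure over events drawn from `ℕ`. -/
structure ES (P M : Type) where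
  ev : Set ℕ
  le : ℕ → ℕ → Prop
  conf : ℕ → ℕ → Prop
  lbl : ℕ → Label P M

namespace ES

variable (E : ES P M)

/-- Configurations: downward-closed conflict-free sets of events. -/
def Config (x : Set ℕ) : Prop :=
  x ⊆ E.ev ∧ (∀ e ∈ x, ∀ f ∈ E.ev, E.le f e → f ∈ x) ∧
    ∀ e ∈ x, ∀ f ∈ x, ¬ E.conf e f

/-- `MaxC E`: the ⊆-maximal configurations of `E`. -/
def MaxC : Set (Set ℕ) := {x | E.Config x ∧ ∀ y, E.Config y → x ⊆ y → y = x}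

/-- Minimal events of `s ⊆ E.ev` with respect to `E.le`. -/
def minIn (s : Set ℕ) : Set ℕ := {e ∈ s | ∀ f ∈ s, E.le f e → f = e}

/-- Maximal events of `s ⊆ E.ev` with respect to `E.le`. -/
def maxIn (s : Set ℕ) : Set ℕ := {e ∈ s | ∀ f ∈ s, E.le e f → f = e}

def minEv : Set ℕ := E.minIn E.ev
def maxEv : Set ℕ := E.maxIn E.ev

/-- Labels of the minimal events of `E`. -/
def minLbl : Set (Label P M) := E.lbl '' E.minEv

/-- Labels of the maximal events of `E`. -/
def maxLbl : Set (Label P M) := E.lbl '' E.maxEv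

/-- All labels occurring in `E`. -/
def lblSet : Set (Label P M) := E.lbl '' E.ev

/-- The projection `E↾A`: the restriction of `E` to the events whose label has subject `A`. -/
def proj (A : P) : ES P M where
  ev := {e ∈ E.ev | (E.lbl e).sbj = A}
  le u v := E.le u v ∧ (u ∈ E.ev ∧ (E.lbl u).sbj = A) ∧ (v ∈ E.ev ∧ (E.lbl v).sbj = A)
  conf u v := E.conf u v ∧ (u ∈ E.ev ∧ (E.lbl u).sbj = A) ∧ (v ∈ E.ev ∧ (E.lbl v).sbj = A)
  lbl := E.lbl

/-- The projection `x↾A` of a configuration (as a set of events of `E`). -/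
def projC (x : Set ℕ) (A : P) : Set ℕ := {e ∈ x | (E.lbl e).sbj = A}

end ES

/-! ## Constructions on event structures -/

/-- Tag for the events of a left component. -/
def tagL (e : ℕ) : ℕ := Nat.pair 0 e
/-- Tag for the events of a right component. -/
def tagR (e : ℕ) : ℕ := Nat.pair 1 e
/-- Tag for the events of the copy of the second component indexed by (the code of) a
maximal configuration of the first one. -/
def tagC (k e : ℕ) : ℕ := Nat.pair 1 (Nat.pair k e)

/-- A code (injective on finite sets) of sets of naturals. -/
noncomputable def encSet (x : Set ℕ) : ℕ :=
  if h : x.Finite then h.toFinset.sum (fun n => 2 ^ n) else 0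

/-- The empty event structure `ε`. -/
noncomputable def esEmpty [Nonempty P] [Nonempty M] : ES P M where
  ev := ∅
  le _ _ := False
  conf _ _ := False
  lbl _ := Label.out Classical.ofNonempty Classical.ofNonempty Classical.ofNonempty

/-- `⟦A→B:m⟧`: two ordered events labelled `A B!m < A B?m`. -/
def esAct (a b : P) (m : M) : ES P M where
  ev := {0, 1}
  le u v := (u = 0 ∧ v = 0) ∨ (u = 0 ∧ v = 1) ∨ (u = 1 ∧ v = 1)
  conf _ _ := False
  lbl e := if e = 0 then Label.out a b m else Label.inp a b m

/-- Tensor product `E1 ⊗ E2` (componentwise disjoint union). -/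
def esTensor (E1 E2 : ES P M) : ES P M where
  ev := (tagL '' E1.ev) ∪ (tagR '' E2.ev)
  le u v := (∃ e ∈ E1.ev, ∃ f ∈ E1.ev, E1.le e f ∧ u = tagL e ∧ v = tagL f) ∨
            (∃ e ∈ E2.ev, ∃ f ∈ E2.ev, E2.le e f ∧ u = tagR e ∧ v = tagR f)
  conf u v := (∃ e ∈ E1.ev, ∃ f ∈ E1.ev, E1.conf e f ∧ u = tagL e ∧ v = tagL f) ∨
              (∃ e ∈ E2.ev, ∃ f ∈ E2.ev, E2.conf e f ∧ u = tagR e ∧ v = tagR f)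
  lbl u := if (Nat.unpair u).1 = 0 then E1.lbl (Nat.unpair u).2 else E2.lbl (Nat.unpair u).2

/-- Sum `E1 + E2`: disjoint union with all cross pairs of events in conflict. -/
def esSum (E1 E2 : ES P M) : ES P M :=
  { esTensor E1 E2 with
    conf := fun u v => (esTensor E1 E2).conf u v ∨
      (∃ e ∈ E1.ev, ∃ f ∈ E2.ev, (u = tagL e ∧ v = tagR f) ∨ (u = tagR f ∧ v = tagL e)) }

/-- Sequential composition: appends to each maximal configuration `x` of `E1` a disjoint
copy of `E2`, ordering an event of `x` below an event of the copy whenever their labels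
have the same subject. -/
noncomputable def esSeq (E1 E2 : ES P M) : ES P M where
  ev := (tagL '' E1.ev) ∪ {u | ∃ x ∈ E1.MaxC, ∃ e ∈ E2.ev, u = tagC (encSet x) e}
  le u v :=
    (∃ e ∈ E1.ev, ∃ f ∈ E1.ev, E1.le e f ∧ u = tagL e ∧ v = tagL f) ∨
    (∃ x ∈ E1.MaxC, ∃ e ∈ E2.ev, ∃ f ∈ E2.ev, E2.le e f ∧
       u = tagC (encSet x) e ∧ v = tagC (encSet x) f) ∨
    (∃ x ∈ E1.MaxC, ∃ e ∈ x, ∃ f ∈ E2.ev, (E1.lbl e).sbj = (E2.lbl f).sbj ∧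
       u = tagL e ∧ v = tagC (encSet x) f)
  conf u v :=
    (∃ e ∈ E1.ev, ∃ f ∈ E1.ev, E1.conf e f ∧ u = tagL e ∧ v = tagL f) ∨
    (∃ x ∈ E1.MaxC, ∃ e ∈ E2.ev, ∃ f ∈ E2.ev, E2.conf e f ∧
       u = tagC (encSet x) e ∧ v = tagC (encSet x) f) ∨
    (∃ x ∈ E1.MaxC, ∃ x' ∈ E1.MaxC, x ≠ x' ∧ ∃ e ∈ E2.ev, ∃ f ∈ E2.ev,
       u = tagC (encSet x) e ∧ v = tagC (encSet x') f) ∨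
    (∃ x ∈ E1.MaxC, ∃ e ∈ E1.ev, (∃ e' ∈ x, E1.conf e e') ∧ ∃ f ∈ E2.ev,
       ((u = tagL e ∧ v = tagC (encSet x) f) ∨ (u = tagC (encSet x) f ∧ v = tagL e)))
  lbl u := if (Nat.unpair u).1 = 0 then E1.lbl (Nat.unpair u).2
           else E2.lbl (Nat.unpair (Nat.unpair u).2).2

/-! ## Well-branchedness -/

/-- Labels of the minimal events of the projection `E↾A`. -/
def minLblP (E : ES P M) (A : P) : Set (Label P M) := (E.proj A).minLbl

/-- `A` is active for the branches `E1`, `E2`. -/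
def active (E1 E2 : ES P M) (A : P) : Prop :=
  minLblP E1 A ≠ ∅ ∧ minLblP E2 A ≠ ∅ ∧
  Disjoint (minLblP E1 A) (minLblP E2 A) ∧
  minLblP E1 A ∪ minLblP E2 A ⊆ Lout

/-- `B` is passive for the branches `E1`, `E2`. -/
def passive (E1 E2 : ES P M) (B : P) : Prop :=
  Disjoint (minLblP E1 B) (minLblP E2 B) ∧
  minLblP E1 B ∪ minLblP E2 B ⊆ Lin ∧
  (minLblP E1 B = ∅ ↔ minLblP E2 B = ∅)

/-- Well-branchedness: a unique active participant, all other participants passive. -/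
def wb (E1 E2 : ES P M) : Prop :=
  ∃ A, active E1 E2 A ∧ (∀ A', active E1 E2 A' → A' = A) ∧
    ∀ B, B ≠ A → passive E1 E2 B

/-! ## Ground g-choreographies and their semantics -/

/-- Ground g-choreographies: `G ::= 0 | A→B:m | G;G | G|G | G+G`. -/
inductive GC (P M : Type) where
  | nil : GC P M
  | act : P → P → M → GC P M
  | seq : GC P M → GC P M → GC P M
  | par : GC P M → GC P M → GC P M
  | cho : GC P M → GC P M → GC P M

/-- `P(G)`: the participants occurring in `G`. -/
def parts : GC P M → Set P
  | .nil => ∅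
  | .act a b _ => {a, b}
  | .seq g1 g2 => parts g1 ∪ parts g2
  | .par g1 g2 => parts g1 ∪ parts g2
  | .cho g1 g2 => parts g1 ∪ parts g2

/-- The semantics `⟦G⟧`: a labelled event structure, or `none` (i.e. `⊥`) when a side
condition fails (the grammar requires `A ≠ B` in interactions; parallel requires disjoint
label sets; choice requires well-branchedness). -/
noncomputable def gsem [Nonempty P] [Nonempty M] : GC P M → Option (ES P M)
  | .nil => some esEmpty
  | .act a b m => if a = b then none else some (esAct a b m)
  | .seq g1 g2 =>
      match gsem g1, gsem g2 with
      | some E1, some E2 => some (esSeq E1 E2)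
      | _, _ => none
  | .par g1 g2 =>
      match gsem g1, gsem g2 with
      | some E1, some E2 =>
          if Disjoint E1.lblSet E2.lblSet then some (esTensor E1 E2) else none
      | _, _ => none
  | .cho g1 g2 =>
      match gsem g1, gsem g2 with
      | some E1, some E2 => if wb E1 E2 then some (esSum E1 E2) else none
      | _, _ => none

/-! ## The typing system -/

/-- Output uniform sets of labels. -/
def outUniform (U V : Set (Label P M)) : Prop := Disjoint U V ∧ U ∪ V ⊆ Lout

/-- Input uniform sets of labels. -/
def inUniform (U V : Set (Label P M)) : Prop := Disjoint U V ∧ U ∪ V ⊆ Lin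

/-- The compatibility condition `compch(φ1,φ2,Π)` of rule t-ch. -/
def compch (φ1 φ2 : Set (Label P M)) (Γ : Set P) : Prop :=
  ∃ A ∈ Γ,
    (outUniform (hat φ1 A) (hat φ2 A) ∧ hat φ1 A ≠ ∅ ∧ hat φ2 A ≠ ∅) ∧
    (∀ A' ∈ Γ, (outUniform (hat φ1 A') (hat φ2 A') ∧ hat φ1 A' ≠ ∅ ∧ hat φ2 A' ≠ ∅) →
        A' = A) ∧
    ∀ B ∈ Γ, B ≠ A →
      inUniform (hat φ1 B) (hat φ2 B) ∧ (hat φ1 B = ∅ ↔ hat φ2 B = ∅)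

/-- The typing judgement `Π ⊢ G : ⟨φ,Λ⟩`. -/
inductive Typing : Set P → GC P M → Set (Label P M) → Set (Label P M) → Prop where
  | temp : Typing ∅ GC.nil ∅ ∅
  | tint {a b : P} {m : M} (hab : a ≠ b) :
      Typing {a, b} (GC.act a b m)
        {Label.out a b m, Label.inp a b m} {Label.out a b m, Label.inp a b m}
  | tseq {Γ1 Γ2 : Set P} {g1 g2 : GC P M} {φ1 φ2 Λ1 Λ2 : Set (Label P M)} :
      Typing Γ1 g1 φ1 Λ1 → Typing Γ2 g2 φ2 Λ2 →
      Typing (Γ1 ∪ Γ2) (GC.seq g1 g2) (φ1 ∪ lminus φ2 Γ1) (Λ2 ∪ lminus Λ1 Γ2)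
  | tpar {Γ1 Γ2 : Set P} {g1 g2 : GC P M} {φ1 φ2 Λ1 Λ2 : Set (Label P M)} :
      Typing Γ1 g1 φ1 Λ1 → Typing Γ2 g2 φ2 Λ2 → Γ1 ∩ Γ2 = ∅ →
      Typing (Γ1 ∪ Γ2) (GC.par g1 g2) (φ1 ∪ φ2) (Λ1 ∪ Λ2)
  | tch {Γ : Set P} {g1 g2 : GC P M} {φ1 φ2 Λ1 Λ2 : Set (Label P M)} :
      Typing Γ g1 φ1 Λ1 → Typing Γ g2 φ2 Λ2 → compch φ1 φ2 Γ →
      Typing Γ (GC.cho g1 g2) (φ1 ∪ φ2) (Λ1 ∪ Λ2)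


/-! ## One-hole contexts and their typing (hole axiom `Γh ⊢ [·] : ⟨φh,Λh⟩`) -/

/-- g-choreography contexts with a single hole. -/
inductive Ctx (P M : Type) where
  | hole : Ctx P M
  | seqL : Ctx P M → GC P M → Ctx P M
  | seqR : GC P M → Ctx P M → Ctx P M
  | parL : Ctx P M → GC P M → Ctx P M
  | parR : GC P M → Ctx P M → Ctx P M
  | choL : Ctx P M → GC P M → Ctx P M
  | choR : GC P M → Ctx P M → Ctx P M

/-- `C.fill g = C[g]`, the replacement of the hole of `C` by `g`. -/
def Ctx.fill : Ctx P M → GC P M → GC P M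
  | .hole, g => g
  | .seqL c g2, g => GC.seq (c.fill g) g2
  | .seqR g1 c, g => GC.seq g1 (c.fill g)
  | .parL c g2, g => GC.par (c.fill g) g2
  | .parR g1 c, g => GC.par g1 (c.fill g)
  | .choL c g2, g => GC.cho (c.fill g) g2
  | .choR g1 c, g => GC.cho g1 (c.fill g)

/-- Typing of one-hole contexts in the type system extended with the axiom
`Γh ⊢ [·] : ⟨φh,Λh⟩` for the hole. -/
inductive CTyping (Γh : Set P) (φh Λh : Set (Label P M)) :
    Set P → Ctx P M → Set (Label P M) → Set (Label P M) → Prop where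
  | hole : CTyping Γh φh Λh Γh Ctx.hole φh Λh
  | seqL {Γ1 Γ2 : Set P} {c : Ctx P M} {g : GC P M} {φ1 φ2 Λ1 Λ2 : Set (Label P M)} :
      CTyping Γh φh Λh Γ1 c φ1 Λ1 → Typing Γ2 g φ2 Λ2 →
      CTyping Γh φh Λh (Γ1 ∪ Γ2) (Ctx.seqL c g) (φ1 ∪ lminus φ2 Γ1) (Λ2 ∪ lminus Λ1 Γ2)
  | seqR {Γ1 Γ2 : Set P} {g : GC P M} {c : Ctx P M} {φ1 φ2 Λ1 Λ2 : Set (Label P M)} :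
      Typing Γ1 g φ1 Λ1 → CTyping Γh φh Λh Γ2 c φ2 Λ2 →
      CTyping Γh φh Λh (Γ1 ∪ Γ2) (Ctx.seqR g c) (φ1 ∪ lminus φ2 Γ1) (Λ2 ∪ lminus Λ1 Γ2)
  | parL {Γ1 Γ2 : Set P} {c : Ctx P M} {g : GC P M} {φ1 φ2 Λ1 Λ2 : Set (Label P M)} :
      CTyping Γh φh Λh Γ1 c φ1 Λ1 → Typing Γ2 g φ2 Λ2 → Γ1 ∩ Γ2 = ∅ →
      CTyping Γh φh Λh (Γ1 ∪ Γ2) (Ctx.parL c g) (φ1 ∪ φ2) (Λ1 ∪ Λ2)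
  | parR {Γ1 Γ2 : Set P} {g : GC P M} {c : Ctx P M} {φ1 φ2 Λ1 Λ2 : Set (Label P M)} :
      Typing Γ1 g φ1 Λ1 → CTyping Γh φh Λh Γ2 c φ2 Λ2 → Γ1 ∩ Γ2 = ∅ →
      CTyping Γh φh Λh (Γ1 ∪ Γ2) (Ctx.parR g c) (φ1 ∪ φ2) (Λ1 ∪ Λ2)
  | choL {Γ : Set P} {c : Ctx P M} {g : GC P M} {φ1 φ2 Λ1 Λ2 : Set (Label P M)} :
      CTyping Γh φh Λh Γ c φ1 Λ1 → Typing Γ g φ2 Λ2 → compch φ1 φ2 Γ →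
      CTyping Γh φh Λh Γ (Ctx.choL c g) (φ1 ∪ φ2) (Λ1 ∪ Λ2)
  | choR {Γ : Set P} {g : GC P M} {c : Ctx P M} {φ1 φ2 Λ1 Λ2 : Set (Label P M)} :
      Typing Γ g φ1 Λ1 → CTyping Γh φh Λh Γ c φ2 Λ2 → compch φ1 φ2 Γ →
      CTyping Γh φh Λh Γ (Ctx.choR g c) (φ1 ∪ φ2) (Λ1 ∪ Λ2)

/-! ## Refinable actions, t-ref, and refinement -/

/-- The three side conditions of the axiom schema t-ref for the refinable action
`A → m1…mn : B1,…,Bn`, represented by the initiator `A` and the nonempty list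
`l = [(m1,B1),…,(mn,Bn)]` with pairwise distinct `Bi`. -/
def trefCond (Γ : Set P) (φ Λ : Set (Label P M)) (A : P) (l : List (M × P)) : Prop :=
  l ≠ [] ∧ (l.map Prod.snd).Nodup ∧
  sbjSet φ = Γ ∧ sbjSet Λ = Γ ∧ sbjSet (φ ∩ Lout) = {A} ∧
  ∀ p ∈ l, ∃ C ∈ Γ, hat Λ p.2 = {Label.inp C p.2 p.1}

/-- `G ref A→m1…mn:B1,…,Bn`: the ground g-choreography `G` refines the refinable action
given by initiator `A` and list `l = [(m1,B1),…,(mn,Bn)]`. -/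
def Refines [Nonempty P] [Nonempty M] (G : GC P M) (A : P) (l : List (M × P)) : Prop :=
  ∃ E : ES P M, gsem G = some E ∧
    sbjSet E.minLbl = {A} ∧
    ∀ x ∈ E.MaxC, ∀ p ∈ l, ∃ C ∈ parts G,
      Label.inp C p.2 p.1 ∈ E.lbl '' (E.maxIn (E.projC x p.2))

/-! ## Multi-hole contexts -/

/-- g-choreography contexts with (numbered) holes. -/
inductive MCtx (P M : Type) where
  | hole : ℕ → MCtx P M
  | nil : MCtx P M
  | act : P → P → M → MCtx P M
  | seq : MCtx P M → MCtx P M → MCtx P M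
  | par : MCtx P M → MCtx P M → MCtx P M
  | cho : MCtx P M → MCtx P M → MCtx P M

/-- The (indices of the) holes occurring in a multi-hole context. -/
def MCtx.holes : MCtx P M → List ℕ
  | .hole i => [i]
  | .nil => []
  | .act _ _ _ => []
  | .seq c1 c2 => c1.holes ++ c2.holes
  | .par c1 c2 => c1.holes ++ c2.holes
  | .cho c1 c2 => c1.holes ++ c2.holes

/-- `C.fill g`: replace each hole `[·]i` by `g i`. -/
def MCtx.fill : MCtx P M → (ℕ → GC P M) → GC P M
  | .hole i, g => g i
  | .nil, _ => GC.nil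
  | .act a b m, _ => GC.act a b m
  | .seq c1 c2, g => GC.seq (c1.fill g) (c2.fill g)
  | .par c1 c2, g => GC.par (c1.fill g) (c2.fill g)
  | .cho c1 c2, g => GC.cho (c1.fill g) (c2.fill g)

/-- Typing of multi-hole contexts in the extended type system, where hole `i` is typed by
the axiom `(σ i).1 ⊢ [·]i : ⟨(σ i).2.1, (σ i).2.2⟩`. -/
inductive MTyping (σ : ℕ → Set P × Set (Label P M) × Set (Label P M)) :
    Set P → MCtx P M → Set (Label P M) → Set (Label P M) → Prop where
  | hole (i : ℕ) : MTyping σ (σ i).1 (MCtx.hole i) (σ i).2.1 (σ i).2.2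
  | temp : MTyping σ ∅ MCtx.nil ∅ ∅
  | tint {a b : P} {m : M} (hab : a ≠ b) :
      MTyping σ {a, b} (MCtx.act a b m)
        {Label.out a b m, Label.inp a b m} {Label.out a b m, Label.inp a b m}
  | tseq {Γ1 Γ2 : Set P} {c1 c2 : MCtx P M} {φ1 φ2 Λ1 Λ2 : Set (Label P M)} :
      MTyping σ Γ1 c1 φ1 Λ1 → MTyping σ Γ2 c2 φ2 Λ2 →
      MTyping σ (Γ1 ∪ Γ2) (MCtx.seq c1 c2) (φ1 ∪ lminus φ2 Γ1) (Λ2 ∪ lminus Λ1 Γ2)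
  | tpar {Γ1 Γ2 : Set P} {c1 c2 : MCtx P M} {φ1 φ2 Λ1 Λ2 : Set (Label P M)} :
      MTyping σ Γ1 c1 φ1 Λ1 → MTyping σ Γ2 c2 φ2 Λ2 → Γ1 ∩ Γ2 = ∅ →
      MTyping σ (Γ1 ∪ Γ2) (MCtx.par c1 c2) (φ1 ∪ φ2) (Λ1 ∪ Λ2)
  | tch {Γ : Set P} {c1 c2 : MCtx P M} {φ1 φ2 Λ1 Λ2 : Set (Label P M)} :
      MTyping σ Γ c1 φ1 Λ1 → MTyping σ Γ c2 φ2 Λ2 → compch φ1 φ2 Γ →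
      MTyping σ Γ (MCtx.cho c1 c2) (φ1 ∪ φ2) (Λ1 ∪ Λ2)

/-! ## Auxiliary lemmas -/

set_option linter.unusedSectionVars false

section Aux

lemma tagL_injective : Function.Injective tagL := fun a b h => by
  simpa [tagL, Nat.pair_eq_pair] using h

lemma tagR_injective : Function.Injective tagR := fun a b h => by
  simpa [tagR, Nat.pair_eq_pair] using h

lemma tagL_ne_tagR (e f : ℕ) : tagL e ≠ tagR f := by
  simp [tagL, tagR, Nat.pair_eq_pair]

lemma tagL_ne_tagC (e k f : ℕ) : tagL e ≠ tagC k f := by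
  simp [tagL, tagC, Nat.pair_eq_pair]

lemma tagC_eq_tagC {k e k' e' : ℕ} : tagC k e = tagC k' e' ↔ k = k' ∧ e = e' := by
  simp [tagC, Nat.pair_eq_pair]

lemma unpair_tagL (e : ℕ) : Nat.unpair (tagL e) = (0, e) := Nat.unpair_pair 0 e
lemma unpair_tagR (e : ℕ) : Nat.unpair (tagR e) = (1, e) := Nat.unpair_pair 1 e
lemma unpair_tagC (k e : ℕ) : Nat.unpair (tagC k e) = (1, Nat.pair k e) :=
  Nat.unpair_pair 1 (Nat.pair k e)

lemma sum_two_pow_injective : Function.Injective (fun s : Finset ℕ => ∑ i ∈ s, 2 ^ i) := by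
  intro s t h
  have hsum : ∀ u : Finset ℕ, ((u.sort (· ≤ ·)).map (fun i => 2 ^ i)).sum = ∑ i ∈ u, 2 ^ i := by
    intro u
    rw [Finset.sum_eq_multiset_sum, ← Finset.sort_eq u (· ≤ ·), Multiset.map_coe,
      Multiset.sum_coe]
  have hs := Nat.bitIndices_twoPowsum (s.sortedLT_sort)
  have ht := Nat.bitIndices_twoPowsum (t.sortedLT_sort)
  rw [hsum] at hs ht
  simp only at h
  rw [h, ht] at hs
  have := congrArg List.toFinset hs
  rw [Finset.sort_toFinset, Finset.sort_toFinset] at this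
  exact this.symm

lemma encSet_inj {x y : Set ℕ} (hx : x.Finite) (hy : y.Finite)
    (h : encSet x = encSet y) : x = y := by
  rw [encSet, encSet, dif_pos hx, dif_pos hy] at h
  have := sum_two_pow_injective h
  rw [← hx.coe_toFinset, ← hy.coe_toFinset, this]

end Aux

section Configs
variable {P M : Type}

lemma config_empty (E : ES P M) : E.Config ∅ := by
  refine ⟨by simp, ?_, ?_⟩ <;> simp

lemma exists_maxC_supset {E : ES P M} (hfin : E.ev.Finite) {x : Set ℕ} (hx : E.Config x) :
    ∃ y ∈ E.MaxC, x ⊆ y := by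
  have hT : {y : Set ℕ | E.Config y ∧ x ⊆ y}.Finite := by
    refine (hfin.finite_subsets).subset ?_
    rintro y ⟨hy, -⟩
    exact hy.1
  obtain ⟨y, hyT, hmax⟩ := Set.Finite.exists_maximalFor id _ hT ⟨x, hx, subset_rfl⟩
  refine ⟨y, ⟨hyT.1, fun z hz hyz => ?_⟩, hyT.2⟩
  exact Set.Subset.antisymm (hmax ⟨hz, hyT.2.trans hyz⟩ hyz) hyz

lemma maxC_nonempty (E : ES P M) (hfin : E.ev.Finite) : ∃ y, y ∈ E.MaxC := by
  obtain ⟨y, hy, -⟩ := exists_maxC_supset hfin (config_empty E)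
  exact ⟨y, hy⟩

lemma maxC_finite {E : ES P M} (hfin : E.ev.Finite) {x : Set ℕ} (hx : x ∈ E.MaxC) :
    x.Finite := hfin.subset hx.1.1

lemma maxC_distinct_conf {E : ES P M} (hsymm : ∀ e f, E.conf e f → E.conf f e)
    {x x' : Set ℕ} (hx : x ∈ E.MaxC) (hx' : x' ∈ E.MaxC) (hne : x ≠ x') :
    ∃ e ∈ x, ∃ e' ∈ x', E.conf e e' := by
  by_contra hc
  push_neg at hc
  have hcfg : E.Config (x ∪ x') := by
    refine ⟨Set.union_subset hx.1.1 hx'.1.1, ?_, ?_⟩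
    · rintro e (he | he) f hf hle
      · exact Or.inl (hx.1.2.1 e he f hf hle)
      · exact Or.inr (hx'.1.2.1 e he f hf hle)
    · rintro e (he | he) f (hf | hf) hconf
      · exact hx.1.2.2 e he f hf hconf
      · exact hc e he f hf hconf
      · exact hc f hf e he (hsymm _ _ hconf)
      · exact hx'.1.2.2 e he f hf hconf
  have h1 := hx.2 _ hcfg Set.subset_union_left
  have h2 := hx'.2 _ hcfg Set.subset_union_right
  exact hne (h1.symm.trans h2)

end Configs

section GoodDef
variable {P M : Type}

lemma mem_proj_minEv {E : ES P M} {A : P} {u : ℕ} :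
    u ∈ (E.proj A).minEv ↔ (u ∈ E.ev ∧ (E.lbl u).sbj = A) ∧
      ∀ f, f ∈ E.ev → (E.lbl f).sbj = A → E.le f u → f = u := by
  simp only [ES.minEv, ES.minIn, ES.proj, Set.mem_setOf_eq]
  constructor
  · rintro ⟨⟨hu, hs⟩, h⟩
    exact ⟨⟨hu, hs⟩, fun f hf hfs hle => h f ⟨hf, hfs⟩ ⟨hle, ⟨hf, hfs⟩, hu, hs⟩⟩
  · rintro ⟨⟨hu, hs⟩, h⟩
    exact ⟨⟨hu, hs⟩, fun f hf hle => h f hf.1 hf.2 hle.1⟩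

lemma mem_proj_maxEv {E : ES P M} {A : P} {u : ℕ} :
    u ∈ (E.proj A).maxEv ↔ (u ∈ E.ev ∧ (E.lbl u).sbj = A) ∧
      ∀ f, f ∈ E.ev → (E.lbl f).sbj = A → E.le u f → f = u := by
  simp only [ES.maxEv, ES.maxIn, ES.proj, Set.mem_setOf_eq]
  constructor
  · rintro ⟨⟨hu, hs⟩, h⟩
    exact ⟨⟨hu, hs⟩, fun f hf hfs hle => h f ⟨hf, hfs⟩ ⟨hle, ⟨hu, hs⟩, hf, hfs⟩⟩
  · rintro ⟨⟨hu, hs⟩, h⟩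
    exact ⟨⟨hu, hs⟩, fun f hf hle => h f hf.1 hf.2 hle.1⟩

lemma proj_lbl (E : ES P M) (A : P) : (E.proj A).lbl = E.lbl := rfl

lemma hat_union (φ1 φ2 : Set (Label P M)) (A : P) :
    hat (φ1 ∪ φ2) A = hat φ1 A ∪ hat φ2 A := by
  ext l; simp only [hat, Set.mem_union, Set.mem_setOf_eq]; tauto

lemma hat_lminus_mem {φ : Set (Label P M)} {Γ : Set P} {A : P} (hA : A ∈ Γ) :
    hat (lminus φ Γ) A = ∅ := by
  ext l; simp only [hat, lminus, Set.mem_setOf_eq, Set.mem_empty_iff_false, iff_false]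
  rintro ⟨⟨-, h⟩, rfl⟩; exact h hA

lemma hat_lminus_not_mem {φ : Set (Label P M)} {Γ : Set P} {A : P} (hA : A ∉ Γ) :
    hat (lminus φ Γ) A = hat φ A := by
  ext l
  simp only [hat, lminus, Set.mem_setOf_eq]
  constructor
  · rintro ⟨⟨h, -⟩, h2⟩; exact ⟨h, h2⟩
  · rintro ⟨h, h2⟩; exact ⟨⟨h, h2 ▸ hA⟩, h2⟩

/-- The invariant propagated through the structural induction. -/
structure Good (Γ : Set P) (φ Λ : Set (Label P M)) (E : ES P M) : Prop where
  fin : E.ev.Finite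
  conf_symm : ∀ e f, E.conf e f → E.conf f e
  sbj_mem : ∀ e ∈ E.ev, (E.lbl e).sbj ∈ Γ
  sbj_surj : ∀ A ∈ Γ, ∃ e ∈ E.ev, (E.lbl e).sbj = A
  maxc_cover : ∀ x ∈ E.MaxC, ∀ A ∈ Γ, ∃ e ∈ x, (E.lbl e).sbj = A
  mem_maxc : ∀ e ∈ E.ev, ∃ x ∈ E.MaxC, e ∈ x
  minP : ∀ A, (E.proj A).minLbl = hat φ A
  maxP : ∀ A, (E.proj A).maxLbl = hat Λ A

lemma Good.proj_ev_empty {Γ : Set P} {φ Λ : Set (Label P M)} {E : ES P M}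
    (g : Good Γ φ Λ E) {A : P} (hA : A ∉ Γ) : (E.proj A).ev = ∅ := by
  ext e
  simp only [ES.proj, Set.mem_setOf_eq, Set.mem_empty_iff_false, iff_false, not_and]
  intro he hs
  exact hA (hs ▸ g.sbj_mem e he)

lemma Good.hat_min_empty {Γ : Set P} {φ Λ : Set (Label P M)} {E : ES P M}
    (g : Good Γ φ Λ E) {A : P} (hA : A ∉ Γ) : hat φ A = ∅ := by
  rw [← g.minP A, ES.minLbl]
  have : (E.proj A).minEv = ∅ := by
    rw [ES.minEv]
    refine Set.eq_empty_of_subset_empty ?_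
    rw [← g.proj_ev_empty hA]
    exact fun e he => he.1
  rw [this, Set.image_empty]

lemma Good.hat_max_empty {Γ : Set P} {φ Λ : Set (Label P M)} {E : ES P M}
    (g : Good Γ φ Λ E) {A : P} (hA : A ∉ Γ) : hat Λ A = ∅ := by
  rw [← g.maxP A, ES.maxLbl]
  have : (E.proj A).maxEv = ∅ := by
    rw [ES.maxEv]
    refine Set.eq_empty_of_subset_empty ?_
    rw [← g.proj_ev_empty hA]
    exact fun e he => he.1
  rw [this, Set.image_empty]

end GoodDef

section BaseCases
variable {P M : Type} [Nonempty P] [Nonempty M]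

lemma good_empty : Good (∅ : Set P) ∅ ∅ (esEmpty (P := P) (M := M)) := by
  have hev : (esEmpty (P := P) (M := M)).ev = ∅ := rfl
  refine ⟨by rw [hev]; exact Set.finite_empty, ?_, ?_, ?_, ?_, ?_, ?_, ?_⟩
  · intro e f h; exact h.elim
  · intro e he; rw [hev] at he; exact he.elim
  · intro A hA; exact hA.elim
  · intro x hx A hA; exact hA.elim
  · intro e he; rw [hev] at he; exact he.elim
  · intro A
    have h1 : ((esEmpty (P := P) (M := M)).proj A).minEv = ∅ := by
      refine Set.eq_empty_of_subset_empty ?_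
      rintro e ⟨⟨he, -⟩, -⟩
      exact he
    rw [ES.minLbl, h1, Set.image_empty]
    ext l; simp [hat]
  · intro A
    have h1 : ((esEmpty (P := P) (M := M)).proj A).maxEv = ∅ := by
      refine Set.eq_empty_of_subset_empty ?_
      rintro e ⟨⟨he, -⟩, -⟩
      exact he
    rw [ES.maxLbl, h1, Set.image_empty]
    ext l; simp [hat]

variable {a b : P} {m : M}

lemma good_act (hab : a ≠ b) :
    Good {a, b} {Label.out a b m, Label.inp a b m} {Label.out a b m, Label.inp a b m}
      (esAct a b m) := by
  have hev : (esAct a b m).ev = {0, 1} := rfl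
  have key : ∀ u ∈ (esAct a b m).ev, ∀ f ∈ (esAct a b m).ev,
      ((esAct a b m).lbl u).sbj = ((esAct a b m).lbl f).sbj → f = u := by
    have s0 : ((esAct a b m).lbl 0).sbj = a := rfl
    have s1 : ((esAct a b m).lbl 1).sbj = b := rfl
    rintro u (rfl | rfl) f (rfl | rfl) h
    · rfl
    · exact absurd (by rw [s0, s1] at h; exact h) hab
    · exact absurd (by rw [s0, s1] at h; exact h.symm) hab
    · rfl
  have hcfg : (esAct a b m).Config {0, 1} := by
    refine ⟨by rw [hev], ?_, ?_⟩
    · intro e he f hf hle; exact hf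
    · intro e he f hf hc; exact hc
  have hmaxc : (esAct a b m).MaxC = {{0, 1}} := by
    ext x
    simp only [ES.MaxC, Set.mem_setOf_eq, Set.mem_singleton_iff]
    constructor
    · rintro ⟨hx, hmax⟩
      exact (hmax _ hcfg hx.1).symm ▸ rfl
    · rintro rfl
      exact ⟨hcfg, fun y hy hsub => Set.Subset.antisymm hy.1 hsub⟩
  have hproj : ∀ A : P, ((esAct a b m).proj A).minEv =
      {e ∈ (esAct a b m).ev | ((esAct a b m).lbl e).sbj = A} ∧
      ((esAct a b m).proj A).maxEv =
      {e ∈ (esAct a b m).ev | ((esAct a b m).lbl e).sbj = A} := by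
    intro A
    constructor
    · ext u
      rw [mem_proj_minEv]
      simp only [Set.mem_setOf_eq]
      exact ⟨fun h => h.1, fun ⟨hu, hs⟩ => ⟨⟨hu, hs⟩,
        fun f hf hfs _ => key u hu f hf (by rw [hs, hfs])⟩⟩
    · ext u
      rw [mem_proj_maxEv]
      simp only [Set.mem_setOf_eq]
      exact ⟨fun h => h.1, fun ⟨hu, hs⟩ => ⟨⟨hu, hs⟩,
        fun f hf hfs _ => key u hu f hf (by rw [hs, hfs])⟩⟩
  have hlblset : ∀ A : P, (esAct a b m).lbl ''
      {e ∈ (esAct a b m).ev | ((esAct a b m).lbl e).sbj = A} =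
      hat {Label.out a b m, Label.inp a b m} A := by
    intro A
    ext l
    simp only [Set.mem_image, Set.mem_setOf_eq, hat]
    constructor
    · rintro ⟨e, ⟨he, hs⟩, rfl⟩
      rcases he with rfl | rfl
      · exact ⟨Or.inl rfl, hs⟩
      · exact ⟨Or.inr rfl, hs⟩
    · rintro ⟨(rfl | rfl), hs⟩
      · exact ⟨0, ⟨Or.inl rfl, hs⟩, rfl⟩
      · exact ⟨1, ⟨Or.inr rfl, hs⟩, rfl⟩
  refine ⟨?_, ?_, ?_, ?_, ?_, ?_, ?_, ?_⟩
  · rw [hev]; exact (Set.finite_singleton 1).insert 0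
  · intro e f h; exact h
  · rintro e (rfl | rfl)
    · exact Or.inl rfl
    · exact Or.inr rfl
  · rintro A (rfl | rfl)
    · exact ⟨0, Or.inl rfl, rfl⟩
    · exact ⟨1, Or.inr rfl, rfl⟩
  · intro x hx A hA
    rw [hmaxc] at hx
    rcases hx with rfl
    rcases hA with rfl | rfl
    · exact ⟨0, Or.inl rfl, rfl⟩
    · exact ⟨1, Or.inr rfl, rfl⟩
  · intro e he
    exact ⟨{0, 1}, by rw [hmaxc]; rfl, he⟩
  · intro A; rw [ES.minLbl, (hproj A).1, proj_lbl, hlblset]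
  · intro A; rw [ES.maxLbl, (hproj A).2, proj_lbl, hlblset]

end BaseCases

section Tensor
variable {P M : Type} {E1 E2 : ES P M}

lemma tensor_lbl_tagL (E1 E2 : ES P M) (e : ℕ) :
    (esTensor E1 E2).lbl (tagL e) = E1.lbl e := by
  simp [esTensor, tagL, Nat.unpair_pair]

lemma tensor_lbl_tagR (E1 E2 : ES P M) (e : ℕ) :
    (esTensor E1 E2).lbl (tagR e) = E2.lbl e := by
  simp [esTensor, tagR, Nat.unpair_pair]

lemma tensor_config_iff {z : Set ℕ} :
    (esTensor E1 E2).Config z ↔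
      ∃ x y, E1.Config x ∧ E2.Config y ∧ z = tagL '' x ∪ tagR '' y := by
  constructor
  · rintro ⟨hsub, hdc, hcf⟩
    refine ⟨{e | e ∈ E1.ev ∧ tagL e ∈ z}, {f | f ∈ E2.ev ∧ tagR f ∈ z}, ⟨?_, ?_, ?_⟩,
      ⟨?_, ?_, ?_⟩, ?_⟩
    · exact fun e he => he.1
    · rintro e ⟨he, hez⟩ f hf hle
      have hmem : tagL f ∈ (esTensor E1 E2).ev := Or.inl ⟨f, hf, rfl⟩
      have : tagL f ∈ z := hdc _ hez _ hmem (Or.inl ⟨f, hf, e, he, hle, rfl, rfl⟩)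
      exact ⟨hf, this⟩
    · rintro e ⟨he, hez⟩ f ⟨hf, hfz⟩ hc
      exact hcf _ hez _ hfz (Or.inl ⟨e, he, f, hf, hc, rfl, rfl⟩)
    · exact fun e he => he.1
    · rintro e ⟨he, hez⟩ f hf hle
      have hmem : tagR f ∈ (esTensor E1 E2).ev := Or.inr ⟨f, hf, rfl⟩
      have : tagR f ∈ z := hdc _ hez _ hmem (Or.inr ⟨f, hf, e, he, hle, rfl, rfl⟩)
      exact ⟨hf, this⟩
    · rintro e ⟨he, hez⟩ f ⟨hf, hfz⟩ hc
      exact hcf _ hez _ hfz (Or.inr ⟨e, he, f, hf, hc, rfl, rfl⟩)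
    · ext u
      constructor
      · intro hu
        rcases hsub hu with ⟨e, he, rfl⟩ | ⟨f, hf, rfl⟩
        · exact Or.inl ⟨e, ⟨he, hu⟩, rfl⟩
        · exact Or.inr ⟨f, ⟨hf, hu⟩, rfl⟩
      · rintro (⟨e, ⟨-, hez⟩, rfl⟩ | ⟨f, ⟨-, hfz⟩, rfl⟩)
        · exact hez
        · exact hfz
  · rintro ⟨x, y, hx, hy, rfl⟩
    refine ⟨?_, ?_, ?_⟩
    · rintro u (⟨e, he, rfl⟩ | ⟨f, hf, rfl⟩)
      · exact Or.inl ⟨e, hx.1 he, rfl⟩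
      · exact Or.inr ⟨f, hy.1 hf, rfl⟩
    · rintro u hu v hv hle
      rcases hle with ⟨e, he, f, hf, hle, rfl, rfl⟩ | ⟨e, he, f, hf, hle, rfl, rfl⟩
      · rcases hu with ⟨e', he', heq⟩ | ⟨e', he', heq⟩
        · rcases tagL_injective heq with rfl
          exact Or.inl ⟨e, hx.2.1 e' he' e he hle, rfl⟩
        · exact absurd heq.symm (tagL_ne_tagR _ _)
      · rcases hu with ⟨e', he', heq⟩ | ⟨e', he', heq⟩
        · exact absurd heq (tagL_ne_tagR _ _)
        · rcases tagR_injective heq with rfl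
          exact Or.inr ⟨e, hy.2.1 e' he' e he hle, rfl⟩
    · rintro u hu v hv hc
      rcases hc with ⟨e, he, f, hf, hc, rfl, rfl⟩ | ⟨e, he, f, hf, hc, rfl, rfl⟩
      · rcases hu with ⟨e', he', heq⟩ | ⟨e', he', heq⟩
        · rcases hv with ⟨f', hf', hfq⟩ | ⟨f', hf', hfq⟩
          · rcases tagL_injective heq with rfl
            rcases tagL_injective hfq with rfl
            exact hx.2.2 _ he' _ hf' hc
          · exact absurd hfq.symm (tagL_ne_tagR _ _)
        · exact absurd heq.symm (tagL_ne_tagR _ _)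
      · rcases hu with ⟨e', he', heq⟩ | ⟨e', he', heq⟩
        · exact absurd heq (tagL_ne_tagR _ _)
        · rcases hv with ⟨f', hf', hfq⟩ | ⟨f', hf', hfq⟩
          · exact absurd hfq (tagL_ne_tagR _ _)
          · rcases tagR_injective heq with rfl
            rcases tagR_injective hfq with rfl
            exact hy.2.2 _ he' _ hf' hc

lemma tensor_maxC_iff (h1 : E1.ev.Finite) (h2 : E2.ev.Finite) {z : Set ℕ} :
    z ∈ (esTensor E1 E2).MaxC ↔
      ∃ x ∈ E1.MaxC, ∃ y ∈ E2.MaxC, z = tagL '' x ∪ tagR '' y := by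
  constructor
  · rintro ⟨hz, hmax⟩
    obtain ⟨x, y, hx, hy, rfl⟩ := tensor_config_iff.1 hz
    obtain ⟨xb, hxb, hxs⟩ := exists_maxC_supset h1 hx
    obtain ⟨yb, hyb, hys⟩ := exists_maxC_supset h2 hy
    have hcfg : (esTensor E1 E2).Config (tagL '' xb ∪ tagR '' yb) :=
      tensor_config_iff.2 ⟨xb, yb, hxb.1, hyb.1, rfl⟩
    have hsub : tagL '' x ∪ tagR '' y ⊆ tagL '' xb ∪ tagR '' yb :=
      Set.union_subset_union (Set.image_mono hxs) (Set.image_mono hys)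
    have := hmax _ hcfg hsub
    exact ⟨xb, hxb, yb, hyb, this.symm⟩
  · rintro ⟨x, hx, y, hy, rfl⟩
    refine ⟨tensor_config_iff.2 ⟨x, y, hx.1, hy.1, rfl⟩, ?_⟩
    intro w hw hsub
    obtain ⟨x', y', hx', hy', rfl⟩ := tensor_config_iff.1 hw
    have hxx : x ⊆ x' := by
      intro e he
      rcases hsub (Or.inl ⟨e, he, rfl⟩) with ⟨e', he', heq⟩ | ⟨e', he', heq⟩
      · rcases tagL_injective heq with rfl; exact he'
      · exact absurd heq.symm (tagL_ne_tagR _ _)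
    have hyy : y ⊆ y' := by
      intro f hf
      rcases hsub (Or.inr ⟨f, hf, rfl⟩) with ⟨e', he', heq⟩ | ⟨e', he', heq⟩
      · exact absurd heq (tagL_ne_tagR _ _)
      · rcases tagR_injective heq with rfl; exact he'
    rw [hx.2 x' hx' hxx, hy.2 y' hy' hyy]

lemma tensor_proj_minLbl (A : P) :
    ((esTensor E1 E2).proj A).minLbl = (E1.proj A).minLbl ∪ (E2.proj A).minLbl := by
  ext l
  simp only [ES.minLbl, Set.mem_image, Set.mem_union, proj_lbl]
  constructor
  · rintro ⟨u, hu, rfl⟩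
    rw [mem_proj_minEv] at hu
    obtain ⟨⟨huev, hus⟩, humin⟩ := hu
    rcases huev with ⟨e, he, rfl⟩ | ⟨e, he, rfl⟩
    · refine Or.inl ⟨e, ?_, (tensor_lbl_tagL E1 E2 e).symm⟩
      rw [mem_proj_minEv]
      refine ⟨⟨he, by rwa [tensor_lbl_tagL] at hus⟩, ?_⟩
      intro f hf hfs hle
      have := humin (tagL f) (Or.inl ⟨f, hf, rfl⟩)
        (by rwa [tensor_lbl_tagL]) (Or.inl ⟨f, hf, e, he, hle, rfl, rfl⟩)
      exact tagL_injective this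
    · refine Or.inr ⟨e, ?_, (tensor_lbl_tagR E1 E2 e).symm⟩
      rw [mem_proj_minEv]
      refine ⟨⟨he, by rwa [tensor_lbl_tagR] at hus⟩, ?_⟩
      intro f hf hfs hle
      have := humin (tagR f) (Or.inr ⟨f, hf, rfl⟩)
        (by rwa [tensor_lbl_tagR]) (Or.inr ⟨f, hf, e, he, hle, rfl, rfl⟩)
      exact tagR_injective this
  · rintro (⟨e, he, rfl⟩ | ⟨e, he, rfl⟩)
    · rw [mem_proj_minEv] at he
      obtain ⟨⟨he1, hs⟩, hmin⟩ := he
      refine ⟨tagL e, ?_, tensor_lbl_tagL E1 E2 e⟩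
      rw [mem_proj_minEv]
      refine ⟨⟨Or.inl ⟨e, he1, rfl⟩, by rwa [tensor_lbl_tagL]⟩, ?_⟩
      rintro f hf hfs (⟨e', he', f', hf', hle, rfl, heq⟩ | ⟨e', he', f', hf', hle, rfl, heq⟩)
      · rcases tagL_injective heq with rfl
        rw [tensor_lbl_tagL] at hfs
        rw [hmin e' he' hfs hle]
      · exact absurd heq.symm (Ne.symm (tagL_ne_tagR _ _))
    · rw [mem_proj_minEv] at he
      obtain ⟨⟨he1, hs⟩, hmin⟩ := he
      refine ⟨tagR e, ?_, tensor_lbl_tagR E1 E2 e⟩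
      rw [mem_proj_minEv]
      refine ⟨⟨Or.inr ⟨e, he1, rfl⟩, by rwa [tensor_lbl_tagR]⟩, ?_⟩
      rintro f hf hfs (⟨e', he', f', hf', hle, rfl, heq⟩ | ⟨e', he', f', hf', hle, rfl, heq⟩)
      · exact absurd heq (Ne.symm (tagL_ne_tagR _ _))
      · rcases tagR_injective heq with rfl
        rw [tensor_lbl_tagR] at hfs
        rw [hmin e' he' hfs hle]

lemma tensor_proj_maxLbl (A : P) :
    ((esTensor E1 E2).proj A).maxLbl = (E1.proj A).maxLbl ∪ (E2.proj A).maxLbl := by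
  ext l
  simp only [ES.maxLbl, Set.mem_image, Set.mem_union, proj_lbl]
  constructor
  · rintro ⟨u, hu, rfl⟩
    rw [mem_proj_maxEv] at hu
    obtain ⟨⟨huev, hus⟩, humax⟩ := hu
    rcases huev with ⟨e, he, rfl⟩ | ⟨e, he, rfl⟩
    · refine Or.inl ⟨e, ?_, (tensor_lbl_tagL E1 E2 e).symm⟩
      rw [mem_proj_maxEv]
      refine ⟨⟨he, by rwa [tensor_lbl_tagL] at hus⟩, ?_⟩
      intro f hf hfs hle
      have := humax (tagL f) (Or.inl ⟨f, hf, rfl⟩)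
        (by rwa [tensor_lbl_tagL]) (Or.inl ⟨e, he, f, hf, hle, rfl, rfl⟩)
      exact tagL_injective this
    · refine Or.inr ⟨e, ?_, (tensor_lbl_tagR E1 E2 e).symm⟩
      rw [mem_proj_maxEv]
      refine ⟨⟨he, by rwa [tensor_lbl_tagR] at hus⟩, ?_⟩
      intro f hf hfs hle
      have := humax (tagR f) (Or.inr ⟨f, hf, rfl⟩)
        (by rwa [tensor_lbl_tagR]) (Or.inr ⟨e, he, f, hf, hle, rfl, rfl⟩)
      exact tagR_injective this
  · rintro (⟨e, he, rfl⟩ | ⟨e, he, rfl⟩)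
    · rw [mem_proj_maxEv] at he
      obtain ⟨⟨he1, hs⟩, hmax⟩ := he
      refine ⟨tagL e, ?_, tensor_lbl_tagL E1 E2 e⟩
      rw [mem_proj_maxEv]
      refine ⟨⟨Or.inl ⟨e, he1, rfl⟩, by rwa [tensor_lbl_tagL]⟩, ?_⟩
      rintro f hf hfs (⟨e', he', f', hf', hle, heq, rfl⟩ | ⟨e', he', f', hf', hle, heq, rfl⟩)
      · rcases tagL_injective heq with rfl
        rw [tensor_lbl_tagL] at hfs
        rw [hmax f' hf' hfs hle]
      · exact absurd heq.symm (Ne.symm (tagL_ne_tagR _ _))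
    · rw [mem_proj_maxEv] at he
      obtain ⟨⟨he1, hs⟩, hmax⟩ := he
      refine ⟨tagR e, ?_, tensor_lbl_tagR E1 E2 e⟩
      rw [mem_proj_maxEv]
      refine ⟨⟨Or.inr ⟨e, he1, rfl⟩, by rwa [tensor_lbl_tagR]⟩, ?_⟩
      rintro f hf hfs (⟨e', he', f', hf', hle, heq, rfl⟩ | ⟨e', he', f', hf', hle, heq, rfl⟩)
      · exact absurd heq (Ne.symm (tagL_ne_tagR _ _))
      · rcases tagR_injective heq with rfl
        rw [tensor_lbl_tagR] at hfs
        rw [hmax f' hf' hfs hle]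

lemma good_tensor {Γ1 Γ2 : Set P} {φ1 φ2 Λ1 Λ2 : Set (Label P M)}
    (g1 : Good Γ1 φ1 Λ1 E1) (g2 : Good Γ2 φ2 Λ2 E2) :
    Good (Γ1 ∪ Γ2) (φ1 ∪ φ2) (Λ1 ∪ Λ2) (esTensor E1 E2) := by
  refine ⟨(g1.fin.image tagL).union (g2.fin.image tagR), ?_, ?_, ?_, ?_, ?_, ?_, ?_⟩
  · rintro u v (⟨e, he, f, hf, hc, rfl, rfl⟩ | ⟨e, he, f, hf, hc, rfl, rfl⟩)
    · exact Or.inl ⟨f, hf, e, he, g1.conf_symm _ _ hc, rfl, rfl⟩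
    · exact Or.inr ⟨f, hf, e, he, g2.conf_symm _ _ hc, rfl, rfl⟩
  · rintro u (⟨e, he, rfl⟩ | ⟨e, he, rfl⟩)
    · rw [tensor_lbl_tagL]; exact Or.inl (g1.sbj_mem e he)
    · rw [tensor_lbl_tagR]; exact Or.inr (g2.sbj_mem e he)
  · rintro A (hA | hA)
    · obtain ⟨e, he, hs⟩ := g1.sbj_surj A hA
      exact ⟨tagL e, Or.inl ⟨e, he, rfl⟩, by rwa [tensor_lbl_tagL]⟩
    · obtain ⟨e, he, hs⟩ := g2.sbj_surj A hA
      exact ⟨tagR e, Or.inr ⟨e, he, rfl⟩, by rwa [tensor_lbl_tagR]⟩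
  · intro z hz A hA
    obtain ⟨x, hx, y, hy, rfl⟩ := (tensor_maxC_iff g1.fin g2.fin).1 hz
    rcases hA with hA | hA
    · obtain ⟨e, he, hs⟩ := g1.maxc_cover x hx A hA
      exact ⟨tagL e, Or.inl ⟨e, he, rfl⟩, by rwa [tensor_lbl_tagL]⟩
    · obtain ⟨e, he, hs⟩ := g2.maxc_cover y hy A hA
      exact ⟨tagR e, Or.inr ⟨e, he, rfl⟩, by rwa [tensor_lbl_tagR]⟩
  · rintro u (⟨e, he, rfl⟩ | ⟨e, he, rfl⟩)
    · obtain ⟨x, hx, hex⟩ := g1.mem_maxc e he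
      obtain ⟨y, hy⟩ := maxC_nonempty E2 g2.fin
      exact ⟨tagL '' x ∪ tagR '' y, (tensor_maxC_iff g1.fin g2.fin).2 ⟨x, hx, y, hy, rfl⟩,
        Or.inl ⟨e, hex, rfl⟩⟩
    · obtain ⟨y, hy, hey⟩ := g2.mem_maxc e he
      obtain ⟨x, hx⟩ := maxC_nonempty E1 g1.fin
      exact ⟨tagL '' x ∪ tagR '' y, (tensor_maxC_iff g1.fin g2.fin).2 ⟨x, hx, y, hy, rfl⟩,
        Or.inr ⟨e, hey, rfl⟩⟩
  · intro A
    rw [tensor_proj_minLbl, g1.minP, g2.minP, hat_union]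
  · intro A
    rw [tensor_proj_maxLbl, g1.maxP, g2.maxP, hat_union]

end Tensor

section Sum
variable {P M : Type} {E1 E2 : ES P M}

lemma sum_ev : (esSum E1 E2).ev = (esTensor E1 E2).ev := rfl
lemma sum_le : (esSum E1 E2).le = (esTensor E1 E2).le := rfl
lemma sum_lbl : (esSum E1 E2).lbl = (esTensor E1 E2).lbl := rfl

lemma sum_proj_minLbl (A : P) :
    ((esSum E1 E2).proj A).minLbl = ((esTensor E1 E2).proj A).minLbl := rfl

lemma sum_proj_maxLbl (A : P) :
    ((esSum E1 E2).proj A).maxLbl = ((esTensor E1 E2).proj A).maxLbl := rfl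

lemma sum_config_iff {z : Set ℕ} :
    (esSum E1 E2).Config z ↔
      (∃ x, E1.Config x ∧ z = tagL '' x) ∨ (∃ y, E2.Config y ∧ z = tagR '' y) := by
  constructor
  · rintro ⟨hsub, hdc, hcf⟩
    have hnomix : ∀ e ∈ E1.ev, ∀ f ∈ E2.ev, tagL e ∈ z → tagR f ∈ z → False := by
      intro e he f hf hez hfz
      exact hcf _ hez _ hfz (Or.inr ⟨e, he, f, hf, Or.inl ⟨rfl, rfl⟩⟩)
    by_cases hR : ∃ f ∈ E2.ev, tagR f ∈ z
    · obtain ⟨f0, hf0, hf0z⟩ := hR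
      refine Or.inr ⟨{f | f ∈ E2.ev ∧ tagR f ∈ z}, ⟨fun f hf => hf.1, ?_, ?_⟩, ?_⟩
      · rintro e ⟨he, hez⟩ f hf hle
        have hmem : tagR f ∈ (esSum E1 E2).ev := Or.inr ⟨f, hf, rfl⟩
        exact ⟨hf, hdc _ hez _ hmem (Or.inr ⟨f, hf, e, he, hle, rfl, rfl⟩)⟩
      · rintro e ⟨he, hez⟩ f ⟨hf, hfz⟩ hc
        exact hcf _ hez _ hfz (Or.inl (Or.inr ⟨e, he, f, hf, hc, rfl, rfl⟩))
      · ext u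
        constructor
        · intro hu
          rcases hsub hu with ⟨e, he, rfl⟩ | ⟨f, hf, rfl⟩
          · exact absurd hu (fun h => hnomix e he f0 hf0 h hf0z)
          · exact ⟨f, ⟨hf, hu⟩, rfl⟩
        · rintro ⟨f, ⟨-, hfz⟩, rfl⟩
          exact hfz
    · push_neg at hR
      refine Or.inl ⟨{e | e ∈ E1.ev ∧ tagL e ∈ z}, ⟨fun e he => he.1, ?_, ?_⟩, ?_⟩
      · rintro e ⟨he, hez⟩ f hf hle
        have hmem : tagL f ∈ (esSum E1 E2).ev := Or.inl ⟨f, hf, rfl⟩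
        exact ⟨hf, hdc _ hez _ hmem (Or.inl ⟨f, hf, e, he, hle, rfl, rfl⟩)⟩
      · rintro e ⟨he, hez⟩ f ⟨hf, hfz⟩ hc
        exact hcf _ hez _ hfz (Or.inl (Or.inl ⟨e, he, f, hf, hc, rfl, rfl⟩))
      · ext u
        constructor
        · intro hu
          rcases hsub hu with ⟨e, he, rfl⟩ | ⟨f, hf, rfl⟩
          · exact ⟨e, ⟨he, hu⟩, rfl⟩
          · exact absurd hu (hR f hf)
        · rintro ⟨e, ⟨-, hez⟩, rfl⟩
          exact hez
  · rintro (⟨x, hx, rfl⟩ | ⟨y, hy, rfl⟩)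
    · refine ⟨?_, ?_, ?_⟩
      · rintro u ⟨e, he, rfl⟩
        exact Or.inl ⟨e, hx.1 he, rfl⟩
      · rintro u ⟨e, he, rfl⟩ v hv hle
        rcases hle with ⟨e', he', f', hf', hle', rfl, heq⟩ | ⟨e', he', f', hf', hle', rfl, heq⟩
        · rcases tagL_injective heq with rfl
          exact ⟨e', hx.2.1 e he e' he' hle', rfl⟩
        · exact absurd heq (tagL_ne_tagR _ _)
      · rintro u ⟨e, he, rfl⟩ v ⟨f, hf, rfl⟩ hc
        rcases hc with (⟨e', he', f', hf', hc, heq1, heq2⟩ | ⟨e', he', f', hf', hc, heq1, heq2⟩) |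
          ⟨e', he', f', hf', (⟨heq1, heq2⟩ | ⟨heq1, heq2⟩)⟩
        · rcases tagL_injective heq1 with rfl
          rcases tagL_injective heq2 with rfl
          exact hx.2.2 _ he _ hf hc
        · exact absurd heq1 (tagL_ne_tagR _ _)
        · exact absurd heq2 (tagL_ne_tagR _ _)
        · exact absurd heq1 (tagL_ne_tagR _ _)
    · refine ⟨?_, ?_, ?_⟩
      · rintro u ⟨f, hf, rfl⟩
        exact Or.inr ⟨f, hy.1 hf, rfl⟩
      · rintro u ⟨e, he, rfl⟩ v hv hle
        rcases hle with ⟨e', he', f', hf', hle', rfl, heq⟩ | ⟨e', he', f', hf', hle', rfl, heq⟩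
        · exact absurd heq (Ne.symm (tagL_ne_tagR _ _))
        · rcases tagR_injective heq with rfl
          exact ⟨e', hy.2.1 e he e' he' hle', rfl⟩
      · rintro u ⟨e, he, rfl⟩ v ⟨f, hf, rfl⟩ hc
        rcases hc with (⟨e', he', f', hf', hc, heq1, heq2⟩ | ⟨e', he', f', hf', hc, heq1, heq2⟩) |
          ⟨e', he', f', hf', (⟨heq1, heq2⟩ | ⟨heq1, heq2⟩)⟩
        · exact absurd heq1 (Ne.symm (tagL_ne_tagR _ _))
        · rcases tagR_injective heq1 with rfl
          rcases tagR_injective heq2 with rfl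
          exact hy.2.2 _ he _ hf hc
        · exact absurd heq1 (Ne.symm (tagL_ne_tagR _ _))
        · exact absurd heq2 (Ne.symm (tagL_ne_tagR _ _))

lemma sum_maxC_elim {z : Set ℕ} (h1 : E1.ev.Finite) (h2 : E2.ev.Finite)
    (hz : z ∈ (esSum E1 E2).MaxC) :
    (∃ x ∈ E1.MaxC, z = tagL '' x) ∨ (∃ y ∈ E2.MaxC, z = tagR '' y) := by
  rcases sum_config_iff.1 hz.1 with ⟨x, hx, rfl⟩ | ⟨y, hy, rfl⟩
  · obtain ⟨xb, hxb, hxs⟩ := exists_maxC_supset h1 hx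
    have hcfg : (esSum E1 E2).Config (tagL '' xb) := sum_config_iff.2 (Or.inl ⟨xb, hxb.1, rfl⟩)
    have := hz.2 _ hcfg (Set.image_mono hxs)
    exact Or.inl ⟨xb, hxb, this.symm⟩
  · obtain ⟨yb, hyb, hys⟩ := exists_maxC_supset h2 hy
    have hcfg : (esSum E1 E2).Config (tagR '' yb) := sum_config_iff.2 (Or.inr ⟨yb, hyb.1, rfl⟩)
    have := hz.2 _ hcfg (Set.image_mono hys)
    exact Or.inr ⟨yb, hyb, this.symm⟩

lemma sum_maxC_introL {x : Set ℕ} (hx : x ∈ E1.MaxC) (hne : x.Nonempty) :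
    tagL '' x ∈ (esSum E1 E2).MaxC := by
  refine ⟨sum_config_iff.2 (Or.inl ⟨x, hx.1, rfl⟩), ?_⟩
  intro w hw hsub
  rcases sum_config_iff.1 hw with ⟨x', hx', rfl⟩ | ⟨y', hy', rfl⟩
  · have hxx : x ⊆ x' := by
      intro e he
      obtain ⟨e', he', heq⟩ := hsub ⟨e, he, rfl⟩
      rcases tagL_injective heq with rfl
      exact he'
    rw [hx.2 x' hx' hxx]
  · obtain ⟨e, he⟩ := hne
    obtain ⟨f, hf, heq⟩ := hsub ⟨e, he, rfl⟩
    exact absurd heq (Ne.symm (tagL_ne_tagR _ _))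

lemma sum_maxC_introR {y : Set ℕ} (hy : y ∈ E2.MaxC) (hne : y.Nonempty) :
    tagR '' y ∈ (esSum E1 E2).MaxC := by
  refine ⟨sum_config_iff.2 (Or.inr ⟨y, hy.1, rfl⟩), ?_⟩
  intro w hw hsub
  rcases sum_config_iff.1 hw with ⟨x', hx', rfl⟩ | ⟨y', hy', rfl⟩
  · obtain ⟨e, he⟩ := hne
    obtain ⟨f, hf, heq⟩ := hsub ⟨e, he, rfl⟩
    exact absurd heq (tagL_ne_tagR _ _)
  · have hyy : y ⊆ y' := by
      intro e he
      obtain ⟨e', he', heq⟩ := hsub ⟨e, he, rfl⟩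
      rcases tagR_injective heq with rfl
      exact he'
    rw [hy.2 y' hy' hyy]

lemma good_sum {Γ : Set P} {φ1 φ2 Λ1 Λ2 : Set (Label P M)}
    (g1 : Good Γ φ1 Λ1 E1) (g2 : Good Γ φ2 Λ2 E2) :
    Good Γ (φ1 ∪ φ2) (Λ1 ∪ Λ2) (esSum E1 E2) := by
  have gT := good_tensor g1 g2
  rw [Set.union_self] at gT
  refine ⟨gT.fin, ?_, gT.sbj_mem, gT.sbj_surj, ?_, ?_, ?_, ?_⟩
  · rintro u v ((⟨e, he, f, hf, hc, rfl, rfl⟩ | ⟨e, he, f, hf, hc, rfl, rfl⟩) |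
      ⟨e, he, f, hf, (⟨rfl, rfl⟩ | ⟨rfl, rfl⟩)⟩)
    · exact Or.inl (Or.inl ⟨f, hf, e, he, g1.conf_symm _ _ hc, rfl, rfl⟩)
    · exact Or.inl (Or.inr ⟨f, hf, e, he, g2.conf_symm _ _ hc, rfl, rfl⟩)
    · exact Or.inr ⟨e, he, f, hf, Or.inr ⟨rfl, rfl⟩⟩
    · exact Or.inr ⟨e, he, f, hf, Or.inl ⟨rfl, rfl⟩⟩
  · intro z hz A hA
    rcases sum_maxC_elim g1.fin g2.fin hz with ⟨x, hx, rfl⟩ | ⟨y, hy, rfl⟩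
    · obtain ⟨e, he, hs⟩ := g1.maxc_cover x hx A hA
      exact ⟨tagL e, ⟨e, he, rfl⟩, by rw [sum_lbl, tensor_lbl_tagL]; exact hs⟩
    · obtain ⟨e, he, hs⟩ := g2.maxc_cover y hy A hA
      exact ⟨tagR e, ⟨e, he, rfl⟩, by rw [sum_lbl, tensor_lbl_tagR]; exact hs⟩
  · rintro u (⟨e, he, rfl⟩ | ⟨e, he, rfl⟩)
    · obtain ⟨x, hx, hex⟩ := g1.mem_maxc e he
      exact ⟨tagL '' x, sum_maxC_introL hx ⟨e, hex⟩, ⟨e, hex, rfl⟩⟩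
    · obtain ⟨y, hy, hey⟩ := g2.mem_maxc e he
      exact ⟨tagR '' y, sum_maxC_introR hy ⟨e, hey⟩, ⟨e, hey, rfl⟩⟩
  · intro A
    rw [sum_proj_minLbl, tensor_proj_minLbl, g1.minP, g2.minP, hat_union]
  · intro A
    rw [sum_proj_maxLbl, tensor_proj_maxLbl, g1.maxP, g2.maxP, hat_union]

end Sum

section Seq
variable {P M : Type} {E1 E2 : ES P M}

lemma seq_lbl_tagL (E1 E2 : ES P M) (e : ℕ) :
    (esSeq E1 E2).lbl (tagL e) = E1.lbl e := by
  simp [esSeq, tagL, Nat.unpair_pair]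

lemma seq_lbl_tagC (E1 E2 : ES P M) (k e : ℕ) :
    (esSeq E1 E2).lbl (tagC k e) = E2.lbl e := by
  simp [esSeq, tagC, Nat.unpair_pair]

lemma maxC_enc_inj (hfin : E1.ev.Finite) {x x' : Set ℕ}
    (hx : x ∈ E1.MaxC) (hx' : x' ∈ E1.MaxC) (h : encSet x = encSet x') : x = x' :=
  encSet_inj (maxC_finite hfin hx) (maxC_finite hfin hx') h

/-- The maximal configurations of a sequential composition. -/
def cfgS (x y : Set ℕ) : Set ℕ := tagL '' x ∪ (tagC (encSet x)) '' y

lemma mem_cfgS_tagL {x y : Set ℕ} {e : ℕ} : tagL e ∈ cfgS x y ↔ e ∈ x := by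
  constructor
  · rintro (⟨e', he', heq⟩ | ⟨f, hf, heq⟩)
    · rcases tagL_injective heq with rfl; exact he'
    · exact absurd heq.symm (tagL_ne_tagC _ _ _)
  · intro he; exact Or.inl ⟨e, he, rfl⟩

lemma mem_cfgS_tagC {x y : Set ℕ} {k f : ℕ} :
    tagC k f ∈ cfgS x y ↔ k = encSet x ∧ f ∈ y := by
  constructor
  · rintro (⟨e', he', heq⟩ | ⟨f', hf', heq⟩)
    · exact absurd heq (tagL_ne_tagC _ _ _)
    · rcases tagC_eq_tagC.1 heq with ⟨rfl, rfl⟩; exact ⟨rfl, hf'⟩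
  · rintro ⟨rfl, hf⟩; exact Or.inr ⟨f, hf, rfl⟩

lemma mem_seq_ev {u : ℕ} : u ∈ (esSeq E1 E2).ev ↔
    (∃ e ∈ E1.ev, u = tagL e) ∨ (∃ x ∈ E1.MaxC, ∃ f ∈ E2.ev, u = tagC (encSet x) f) := by
  constructor
  · rintro (⟨e, he, rfl⟩ | ⟨x, hx, f, hf, rfl⟩)
    · exact Or.inl ⟨e, he, rfl⟩
    · exact Or.inr ⟨x, hx, f, hf, rfl⟩
  · rintro (⟨e, he, rfl⟩ | ⟨x, hx, f, hf, rfl⟩)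
    · exact Or.inl ⟨e, he, rfl⟩
    · exact Or.inr ⟨x, hx, f, hf, rfl⟩

lemma cfgS_config (hfin : E1.ev.Finite) {x y : Set ℕ}
    (hx : x ∈ E1.MaxC) (hy : E2.Config y) : (esSeq E1 E2).Config (cfgS x y) := by
  refine ⟨?_, ?_, ?_⟩
  · rintro u (⟨e, he, rfl⟩ | ⟨f, hf, rfl⟩)
    · exact Or.inl ⟨e, hx.1.1 he, rfl⟩
    · exact Or.inr ⟨x, hx, f, hy.1 hf, rfl⟩
  · rintro u hu v hv hle
    rcases hu with ⟨e, he, rfl⟩ | ⟨f, hf, rfl⟩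
    · rcases hle with ⟨e', he', f', hf', hle', rfl, heq⟩ |
        ⟨x', hx', e', he', f', hf', hle', rfl, heq⟩ |
        ⟨x', hx', e', he', f', hf', hsbj, rfl, heq⟩
      · rcases tagL_injective heq with rfl
        exact mem_cfgS_tagL.2 (hx.1.2.1 e he e' he' hle')
      · exact absurd heq (tagL_ne_tagC _ _ _)
      · exact absurd heq (tagL_ne_tagC _ _ _)
    · rcases hle with ⟨e', he', f', hf', hle', rfl, heq⟩ |
        ⟨x', hx', e', he', f', hf', hle', rfl, heq⟩ |
        ⟨x', hx', e', he', f', hf', hsbj, rfl, heq⟩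
      · exact absurd heq.symm (tagL_ne_tagC _ _ _)
      · rcases tagC_eq_tagC.1 heq with ⟨henc, rfl⟩
        rcases maxC_enc_inj hfin hx' hx henc.symm with rfl
        exact mem_cfgS_tagC.2 ⟨rfl, hy.2.1 f hf e' he' hle'⟩
      · rcases tagC_eq_tagC.1 heq with ⟨henc, rfl⟩
        rcases maxC_enc_inj hfin hx' hx henc.symm with rfl
        exact mem_cfgS_tagL.2 he'
  · rintro u hu v hv hc
    rcases hc with ⟨e, he, f, hf, hc, rfl, rfl⟩ |
      ⟨x', hx', e, he, f, hf, hc, rfl, rfl⟩ |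
      ⟨x', hx', x'', hx'', hne, e, he, f, hf, rfl, rfl⟩ |
      ⟨x', hx', e, he, ⟨e', he', hc⟩, f, hf, (⟨rfl, rfl⟩ | ⟨rfl, rfl⟩)⟩
    · exact hx.1.2.2 e (mem_cfgS_tagL.1 hu) f (mem_cfgS_tagL.1 hv) hc
    · obtain ⟨henc, hey⟩ := mem_cfgS_tagC.1 hu
      obtain ⟨-, hfy⟩ := mem_cfgS_tagC.1 hv
      exact hy.2.2 e hey f hfy hc
    · obtain ⟨henc1, -⟩ := mem_cfgS_tagC.1 hu
      obtain ⟨henc2, -⟩ := mem_cfgS_tagC.1 hv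
      exact hne (maxC_enc_inj hfin hx' hx'' (henc1.trans henc2.symm))
    · obtain ⟨henc, -⟩ := mem_cfgS_tagC.1 hv
      rcases maxC_enc_inj hfin hx' hx henc with rfl
      exact hx.1.2.2 e (mem_cfgS_tagL.1 hu) e' he' hc
    · obtain ⟨henc, -⟩ := mem_cfgS_tagC.1 hu
      rcases maxC_enc_inj hfin hx' hx henc with rfl
      exact hx.1.2.2 e (mem_cfgS_tagL.1 hv) e' he' hc

lemma seq_left_part {w : Set ℕ} (hw : (esSeq E1 E2).Config w) :
    E1.Config {e | e ∈ E1.ev ∧ tagL e ∈ w} := by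
  refine ⟨fun e he => he.1, ?_, ?_⟩
  · rintro e ⟨he, hez⟩ f hf hle
    have hmem : tagL f ∈ (esSeq E1 E2).ev := Or.inl ⟨f, hf, rfl⟩
    exact ⟨hf, hw.2.1 _ hez _ hmem (Or.inl ⟨f, hf, e, he, hle, rfl, rfl⟩)⟩
  · rintro e ⟨he, hez⟩ f ⟨hf, hfz⟩ hc
    exact hw.2.2 _ hez _ hfz (Or.inl ⟨e, he, f, hf, hc, rfl, rfl⟩)

lemma seq_copy_part {w : Set ℕ} (hw : (esSeq E1 E2).Config w) {x : Set ℕ} (hx : x ∈ E1.MaxC) :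
    E2.Config {f | f ∈ E2.ev ∧ tagC (encSet x) f ∈ w} := by
  refine ⟨fun f hf => hf.1, ?_, ?_⟩
  · rintro f ⟨hf, hfz⟩ f' hf' hle
    have hmem : tagC (encSet x) f' ∈ (esSeq E1 E2).ev := Or.inr ⟨x, hx, f', hf', rfl⟩
    exact ⟨hf', hw.2.1 _ hfz _ hmem (Or.inr (Or.inl ⟨x, hx, f', hf', f, hf, hle, rfl, rfl⟩))⟩
  · rintro f ⟨hf, hfz⟩ f' ⟨hf', hfz'⟩ hc
    exact hw.2.2 _ hfz _ hfz' (Or.inr (Or.inl ⟨x, hx, f, hf, f', hf', hc, rfl, rfl⟩))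

lemma seq_maxC_iff (hfin1 : E1.ev.Finite) (hfin2 : E2.ev.Finite)
    (hsymm1 : ∀ e f, E1.conf e f → E1.conf f e) {z : Set ℕ} :
    z ∈ (esSeq E1 E2).MaxC ↔ ∃ x ∈ E1.MaxC, ∃ y ∈ E2.MaxC, z = cfgS x y := by
  constructor
  · intro hz
    set x0 : Set ℕ := {e | e ∈ E1.ev ∧ tagL e ∈ z} with hx0def
    have hx0 : E1.Config x0 := seq_left_part hz.1
    by_cases hcopy : ∃ x' ∈ E1.MaxC, ∃ f ∈ E2.ev, tagC (encSet x') f ∈ z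
    · obtain ⟨x', hx', f0, hf0, hf0z⟩ := hcopy
      have hsub : x0 ⊆ x' := by
        have hcfgu : E1.Config (x0 ∪ x') := by
          refine ⟨Set.union_subset hx0.1 hx'.1.1, ?_, ?_⟩
          · rintro e (he | he) f hf hle
            · exact Or.inl (hx0.2.1 e he f hf hle)
            · exact Or.inr (hx'.1.2.1 e he f hf hle)
          · have hcross : ∀ e ∈ x0, ∀ e' ∈ x', ¬ E1.conf e e' := by
              intro e he e' he' hc
              exact hz.1.2.2 _ he.2 _ hf0z
                (Or.inr (Or.inr (Or.inr ⟨x', hx', e, he.1, ⟨e', he', hc⟩, f0, hf0,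
                  Or.inl ⟨rfl, rfl⟩⟩)))
            rintro e (he | he) f (hf | hf) hc
            · exact hx0.2.2 e he f hf hc
            · exact hcross e he f hf hc
            · exact hcross f hf e he (hsymm1 _ _ hc)
            · exact hx'.1.2.2 e he f hf hc
        have := hx'.2 _ hcfgu Set.subset_union_right
        rw [← this]
        exact Set.subset_union_left
      set y0 : Set ℕ := {f | f ∈ E2.ev ∧ tagC (encSet x') f ∈ z} with hy0def
      have hy0 : E2.Config y0 := seq_copy_part hz.1 hx'
      obtain ⟨yb, hyb, hybs⟩ := exists_maxC_supset hfin2 hy0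
      have hwcfg : (esSeq E1 E2).Config (cfgS x' yb) := cfgS_config hfin1 hx' hyb.1
      have hzw : z ⊆ cfgS x' yb := by
        intro u hu
        rcases mem_seq_ev.1 (hz.1.1 hu) with ⟨e, he, rfl⟩ | ⟨x'', hx'', f, hf, rfl⟩
        · exact mem_cfgS_tagL.2 (hsub ⟨he, hu⟩)
        · by_cases hxx : x'' = x'
          · subst hxx
            exact mem_cfgS_tagC.2 ⟨rfl, hybs ⟨hf, hu⟩⟩
          · exact absurd (hz.1.2.2 _ hu _ hf0z
              (Or.inr (Or.inr (Or.inl ⟨x'', hx'', x', hx', hxx, f, hf, f0, hf0, rfl, rfl⟩))))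
              (fun h => h)
      have := hz.2 _ hwcfg hzw
      exact ⟨x', hx', yb, hyb, this.symm⟩
    · push_neg at hcopy
      have hzeq : z = tagL '' x0 := by
        ext u
        constructor
        · intro hu
          rcases mem_seq_ev.1 (hz.1.1 hu) with ⟨e, he, rfl⟩ | ⟨x', hx', f, hf, rfl⟩
          · exact ⟨e, ⟨he, hu⟩, rfl⟩
          · exact absurd hu (hcopy x' hx' f hf)
        · rintro ⟨e, he, rfl⟩
          exact he.2
      obtain ⟨xb, hxb, hxbs⟩ := exists_maxC_supset hfin1 hx0
      obtain ⟨yb, hyb⟩ := maxC_nonempty E2 hfin2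
      have hwcfg : (esSeq E1 E2).Config (cfgS xb yb) := cfgS_config hfin1 hxb hyb.1
      have hzw : z ⊆ cfgS xb yb := by
        rw [hzeq]
        rintro u ⟨e, he, rfl⟩
        exact mem_cfgS_tagL.2 (hxbs he)
      have := hz.2 _ hwcfg hzw
      exact ⟨xb, hxb, yb, hyb, this.symm⟩
  · rintro ⟨x, hx, y, hy, rfl⟩
    refine ⟨cfgS_config hfin1 hx hy.1, ?_⟩
    intro w hw hsub
    have hx0 : E1.Config {e | e ∈ E1.ev ∧ tagL e ∈ w} := seq_left_part hw
    have hxeq : {e | e ∈ E1.ev ∧ tagL e ∈ w} = x := by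
      refine hx.2 _ hx0 ?_
      intro e he
      exact ⟨hx.1.1 he, hsub (mem_cfgS_tagL.2 he)⟩
    have hy0 : E2.Config {f | f ∈ E2.ev ∧ tagC (encSet x) f ∈ w} := seq_copy_part hw hx
    have hyeq : {f | f ∈ E2.ev ∧ tagC (encSet x) f ∈ w} = y := by
      refine hy.2 _ hy0 ?_
      intro f hf
      exact ⟨hy.1.1 hf, hsub (mem_cfgS_tagC.2 ⟨rfl, hf⟩)⟩
    ext u
    constructor
    · intro hu
      rcases mem_seq_ev.1 (hw.1 hu) with ⟨e, he, rfl⟩ | ⟨x', hx', f, hf, rfl⟩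
      · exact mem_cfgS_tagL.2 (hxeq ▸ (⟨he, hu⟩ : e ∈ {e | e ∈ E1.ev ∧ tagL e ∈ w}))
      · by_cases hxx : x' = x
        · rw [hxx] at hu ⊢
          refine mem_cfgS_tagC.2 ⟨rfl, ?_⟩
          have hfy : f ∈ {f | f ∈ E2.ev ∧ tagC (encSet x) f ∈ w} := ⟨hf, hu⟩
          rwa [hyeq] at hfy
        · -- w would contain a conflict: some event of x conflicts with x'
          obtain ⟨e1, he1, e2, he2, hc⟩ := maxC_distinct_conf hsymm1 hx hx' (Ne.symm hxx)
          have h1 : tagL e1 ∈ w := hsub (mem_cfgS_tagL.2 he1)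
          exact absurd (hw.2.2 _ h1 _ hu
            (Or.inr (Or.inr (Or.inr ⟨x', hx', e1, hx.1.1 he1, ⟨e2, he2, hc⟩, f, hf,
              Or.inl ⟨rfl, rfl⟩⟩)))) (fun h => h)
    · exact fun hu => hsub hu

end Seq

section GoodSeq
variable {P M : Type} {E1 E2 : ES P M}

lemma good_seq {Γ1 Γ2 : Set P} {φ1 φ2 Λ1 Λ2 : Set (Label P M)}
    (g1 : Good Γ1 φ1 Λ1 E1) (g2 : Good Γ2 φ2 Λ2 E2) :
    Good (Γ1 ∪ Γ2) (φ1 ∪ lminus φ2 Γ1) (Λ2 ∪ lminus Λ1 Γ2) (esSeq E1 E2) := by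
  have hM : E1.MaxC.Finite := (g1.fin.finite_subsets).subset (fun x hx => hx.1.1)
  have hfinev : (esSeq E1 E2).ev.Finite := by
    refine Set.Finite.union (g1.fin.image tagL) ?_
    refine (Set.Finite.image2 (fun x e => tagC (encSet x) e) hM g2.fin).subset ?_
    rintro u ⟨x, hx, f, hf, rfl⟩
    exact Set.mem_image2_of_mem hx hf
  refine ⟨hfinev, ?_, ?_, ?_, ?_, ?_, ?_, ?_⟩
  -- conf_symm
  · rintro u v (⟨e, he, f, hf, hc, rfl, rfl⟩ |
      ⟨x, hx, e, he, f, hf, hc, rfl, rfl⟩ |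
      ⟨x, hx, x', hx', hne, e, he, f, hf, rfl, rfl⟩ |
      ⟨x, hx, e, he, hce, f, hf, (⟨rfl, rfl⟩ | ⟨rfl, rfl⟩)⟩)
    · exact Or.inl ⟨f, hf, e, he, g1.conf_symm _ _ hc, rfl, rfl⟩
    · exact Or.inr (Or.inl ⟨x, hx, f, hf, e, he, g2.conf_symm _ _ hc, rfl, rfl⟩)
    · exact Or.inr (Or.inr (Or.inl ⟨x', hx', x, hx, (Ne.symm hne), f, hf, e, he, rfl, rfl⟩))
    · exact Or.inr (Or.inr (Or.inr ⟨x, hx, e, he, hce, f, hf, Or.inr ⟨rfl, rfl⟩⟩))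
    · exact Or.inr (Or.inr (Or.inr ⟨x, hx, e, he, hce, f, hf, Or.inl ⟨rfl, rfl⟩⟩))
  -- sbj_mem
  · intro u hu
    rcases mem_seq_ev.1 hu with ⟨e, he, rfl⟩ | ⟨x, hx, f, hf, rfl⟩
    · rw [seq_lbl_tagL]; exact Or.inl (g1.sbj_mem e he)
    · rw [seq_lbl_tagC]; exact Or.inr (g2.sbj_mem f hf)
  -- sbj_surj
  · rintro A (hA | hA)
    · obtain ⟨e, he, hs⟩ := g1.sbj_surj A hA
      exact ⟨tagL e, Or.inl ⟨e, he, rfl⟩, by rwa [seq_lbl_tagL]⟩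
    · obtain ⟨f, hf, hs⟩ := g2.sbj_surj A hA
      obtain ⟨x0, hx0⟩ := maxC_nonempty E1 g1.fin
      exact ⟨tagC (encSet x0) f, Or.inr ⟨x0, hx0, f, hf, rfl⟩, by rwa [seq_lbl_tagC]⟩
  -- maxc_cover
  · intro z hz A hA
    obtain ⟨x, hx, y, hy, rfl⟩ := (seq_maxC_iff g1.fin g2.fin g1.conf_symm).1 hz
    rcases hA with hA | hA
    · obtain ⟨e, he, hs⟩ := g1.maxc_cover x hx A hA
      exact ⟨tagL e, mem_cfgS_tagL.2 he, by rwa [seq_lbl_tagL]⟩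
    · obtain ⟨f, hf, hs⟩ := g2.maxc_cover y hy A hA
      exact ⟨tagC (encSet x) f, mem_cfgS_tagC.2 ⟨rfl, hf⟩, by rwa [seq_lbl_tagC]⟩
  -- mem_maxc
  · intro u hu
    rcases mem_seq_ev.1 hu with ⟨e, he, rfl⟩ | ⟨x, hx, f, hf, rfl⟩
    · obtain ⟨x, hx, hex⟩ := g1.mem_maxc e he
      obtain ⟨y, hy⟩ := maxC_nonempty E2 g2.fin
      exact ⟨cfgS x y, (seq_maxC_iff g1.fin g2.fin g1.conf_symm).2 ⟨x, hx, y, hy, rfl⟩,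
        mem_cfgS_tagL.2 hex⟩
    · obtain ⟨y, hy, hfy⟩ := g2.mem_maxc f hf
      exact ⟨cfgS x y, (seq_maxC_iff g1.fin g2.fin g1.conf_symm).2 ⟨x, hx, y, hy, rfl⟩,
        mem_cfgS_tagC.2 ⟨rfl, hfy⟩⟩
  -- minP
  · intro A
    rw [hat_union]
    ext l
    simp only [ES.minLbl, Set.mem_image, Set.mem_union, proj_lbl]
    constructor
    · rintro ⟨u, hu, rfl⟩
      rw [mem_proj_minEv] at hu
      obtain ⟨⟨huev, hus⟩, humin⟩ := hu
      rcases mem_seq_ev.1 huev with ⟨e, he, rfl⟩ | ⟨x, hx, f, hf, rfl⟩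
      · rw [seq_lbl_tagL] at hus ⊢
        refine Or.inl ?_
        rw [← g1.minP A]
        refine ⟨e, ?_, rfl⟩
        rw [mem_proj_minEv]
        refine ⟨⟨he, hus⟩, ?_⟩
        intro f hf hfs hle
        exact tagL_injective (humin (tagL f) (Or.inl ⟨f, hf, rfl⟩)
          (by rwa [seq_lbl_tagL]) (Or.inl ⟨f, hf, e, he, hle, rfl, rfl⟩))
      · rw [seq_lbl_tagC] at hus ⊢
        have hA1 : A ∉ Γ1 := by
          intro hA1
          obtain ⟨e, hex, hes⟩ := g1.maxc_cover x hx A hA1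
          have := humin (tagL e) (Or.inl ⟨e, hx.1.1 hex, rfl⟩) (by rwa [seq_lbl_tagL])
            (Or.inr (Or.inr ⟨x, hx, e, hex, f, hf, by rw [hes, hus], rfl, rfl⟩))
          exact tagL_ne_tagC e (encSet x) f this
        refine Or.inr ?_
        rw [hat_lminus_not_mem hA1, ← g2.minP A]
        refine ⟨f, ?_, rfl⟩
        rw [mem_proj_minEv]
        refine ⟨⟨hf, hus⟩, ?_⟩
        intro f' hf' hfs' hle
        have := humin (tagC (encSet x) f') (Or.inr ⟨x, hx, f', hf', rfl⟩)
          (by rwa [seq_lbl_tagC]) (Or.inr (Or.inl ⟨x, hx, f', hf', f, hf, hle, rfl, rfl⟩))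
        exact (tagC_eq_tagC.1 this).2
    · rintro (hl | hl)
      · rw [← g1.minP A] at hl
        obtain ⟨e, he, rfl⟩ := hl
        rw [mem_proj_minEv] at he
        obtain ⟨⟨he1, hs⟩, hmin⟩ := he
        refine ⟨tagL e, ?_, (seq_lbl_tagL E1 E2 e)⟩
        rw [mem_proj_minEv]
        refine ⟨⟨Or.inl ⟨e, he1, rfl⟩, by rwa [seq_lbl_tagL]⟩, ?_⟩
        rintro v hv hvs (⟨e', he', f', hf', hle, rfl, heq⟩ |
          ⟨x', hx', e', he', f', hf', hle, rfl, heq⟩ |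
          ⟨x', hx', e', he', f', hf', hsbj, rfl, heq⟩)
        · rcases tagL_injective heq with rfl
          rw [seq_lbl_tagL] at hvs
          rw [hmin e' he' hvs hle]
        · exact absurd heq (tagL_ne_tagC _ _ _)
        · exact absurd heq (tagL_ne_tagC _ _ _)
      · by_cases hA1 : A ∈ Γ1
        · rw [hat_lminus_mem hA1] at hl
          exact absurd hl (Set.notMem_empty l)
        · rw [hat_lminus_not_mem hA1, ← g2.minP A] at hl
          obtain ⟨f, hf, rfl⟩ := hl
          rw [mem_proj_minEv] at hf
          obtain ⟨⟨hf2, hs⟩, hmin⟩ := hf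
          obtain ⟨x0, hx0⟩ := maxC_nonempty E1 g1.fin
          refine ⟨tagC (encSet x0) f, ?_, seq_lbl_tagC E1 E2 _ f⟩
          rw [mem_proj_minEv]
          refine ⟨⟨Or.inr ⟨x0, hx0, f, hf2, rfl⟩, by rwa [seq_lbl_tagC]⟩, ?_⟩
          rintro v hv hvs (⟨e', he', f', hf', hle, rfl, heq⟩ |
            ⟨x', hx', e', he', f', hf', hle, rfl, heq⟩ |
            ⟨x', hx', e', he', f', hf', hsbj, rfl, heq⟩)
          · exact absurd heq.symm (tagL_ne_tagC _ _ _)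
          · obtain ⟨henc, hff⟩ := tagC_eq_tagC.1 heq
            rcases hff.symm with rfl
            rw [seq_lbl_tagC] at hvs
            rw [hmin e' he' hvs hle, henc]
          · rw [seq_lbl_tagL] at hvs
            exact absurd (hvs ▸ g1.sbj_mem e' (hx'.1.1 he')) hA1
  -- maxP
  · intro A
    rw [hat_union]
    ext l
    simp only [ES.maxLbl, Set.mem_image, Set.mem_union, proj_lbl]
    constructor
    · rintro ⟨u, hu, rfl⟩
      rw [mem_proj_maxEv] at hu
      obtain ⟨⟨huev, hus⟩, humax⟩ := hu
      rcases mem_seq_ev.1 huev with ⟨e, he, rfl⟩ | ⟨x, hx, f, hf, rfl⟩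
      · rw [seq_lbl_tagL] at hus ⊢
        have hA2 : A ∉ Γ2 := by
          intro hA2
          obtain ⟨f, hf, hfs⟩ := g2.sbj_surj A hA2
          obtain ⟨x, hx, hex⟩ := g1.mem_maxc e he
          have := humax (tagC (encSet x) f) (Or.inr ⟨x, hx, f, hf, rfl⟩)
            (by rwa [seq_lbl_tagC])
            (Or.inr (Or.inr ⟨x, hx, e, hex, f, hf, by rw [hus, hfs], rfl, rfl⟩))
          exact tagL_ne_tagC e (encSet x) f this.symm
        refine Or.inr ?_
        rw [hat_lminus_not_mem hA2, ← g1.maxP A]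
        refine ⟨e, ?_, rfl⟩
        rw [mem_proj_maxEv]
        refine ⟨⟨he, hus⟩, ?_⟩
        intro f hf hfs hle
        exact tagL_injective (humax (tagL f) (Or.inl ⟨f, hf, rfl⟩)
          (by rwa [seq_lbl_tagL]) (Or.inl ⟨e, he, f, hf, hle, rfl, rfl⟩))
      · rw [seq_lbl_tagC] at hus ⊢
        refine Or.inl ?_
        rw [← g2.maxP A]
        refine ⟨f, ?_, rfl⟩
        rw [mem_proj_maxEv]
        refine ⟨⟨hf, hus⟩, ?_⟩
        intro f' hf' hfs' hle
        have := humax (tagC (encSet x) f') (Or.inr ⟨x, hx, f', hf', rfl⟩)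
          (by rwa [seq_lbl_tagC]) (Or.inr (Or.inl ⟨x, hx, f, hf, f', hf', hle, rfl, rfl⟩))
        exact (tagC_eq_tagC.1 this).2
    · rintro (hl | hl)
      · rw [← g2.maxP A] at hl
        obtain ⟨f, hf, rfl⟩ := hl
        rw [mem_proj_maxEv] at hf
        obtain ⟨⟨hf2, hs⟩, hmax⟩ := hf
        obtain ⟨x0, hx0⟩ := maxC_nonempty E1 g1.fin
        refine ⟨tagC (encSet x0) f, ?_, seq_lbl_tagC E1 E2 _ f⟩
        rw [mem_proj_maxEv]
        refine ⟨⟨Or.inr ⟨x0, hx0, f, hf2, rfl⟩, by rwa [seq_lbl_tagC]⟩, ?_⟩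
        rintro v hv hvs (⟨e', he', f', hf', hle, heq, rfl⟩ |
          ⟨x', hx', e', he', f', hf', hle, heq, rfl⟩ |
          ⟨x', hx', e', he', f', hf', hsbj, heq, rfl⟩)
        · exact absurd heq.symm (tagL_ne_tagC _ _ _)
        · obtain ⟨henc, hfe⟩ := tagC_eq_tagC.1 heq
          rcases hfe.symm with rfl
          rw [seq_lbl_tagC] at hvs
          rw [hmax f' hf' hvs hle, henc]
        · exact absurd heq.symm (tagL_ne_tagC _ _ _)
      · by_cases hA2 : A ∈ Γ2
        · rw [hat_lminus_mem hA2] at hl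
          exact absurd hl (Set.notMem_empty l)
        · rw [hat_lminus_not_mem hA2, ← g1.maxP A] at hl
          obtain ⟨e, he, rfl⟩ := hl
          rw [mem_proj_maxEv] at he
          obtain ⟨⟨he1, hs⟩, hmax⟩ := he
          refine ⟨tagL e, ?_, seq_lbl_tagL E1 E2 e⟩
          rw [mem_proj_maxEv]
          refine ⟨⟨Or.inl ⟨e, he1, rfl⟩, by rwa [seq_lbl_tagL]⟩, ?_⟩
          rintro v hv hvs (⟨e', he', f', hf', hle, heq, rfl⟩ |
            ⟨x', hx', e', he', f', hf', hle, heq, rfl⟩ |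
            ⟨x', hx', e', he', f', hf', hsbj, heq, rfl⟩)
          · rcases tagL_injective heq with rfl
            rw [seq_lbl_tagL] at hvs
            rw [hmax f' hf' hvs hle]
          · exact absurd heq (tagL_ne_tagC _ _ _)
          · rw [seq_lbl_tagC] at hvs
            exact absurd (hvs ▸ g2.sbj_mem f' hf') hA2

end GoodSeq

section Main
variable {P M : Type}

lemma good_disjoint_lblSet {Γ1 Γ2 : Set P} {φ1 φ2 Λ1 Λ2 : Set (Label P M)} {E1 E2 : ES P M}
    (g1 : Good Γ1 φ1 Λ1 E1) (g2 : Good Γ2 φ2 Λ2 E2) (hd : Γ1 ∩ Γ2 = ∅) :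
    Disjoint E1.lblSet E2.lblSet := by
  rw [Set.disjoint_left]
  rintro l ⟨e, he, rfl⟩ ⟨f, hf, hlf⟩
  have h1 := g1.sbj_mem e he
  have h2 := g2.sbj_mem f hf
  rw [hlf] at h2
  exact Set.eq_empty_iff_forall_notMem.1 hd _ ⟨h1, h2⟩

lemma good_wb {Γ : Set P} {φ1 φ2 Λ1 Λ2 : Set (Label P M)} {E1 E2 : ES P M}
    (g1 : Good Γ φ1 Λ1 E1) (g2 : Good Γ φ2 Λ2 E2) (hcc : compch φ1 φ2 Γ) : wb E1 E2 := by
  obtain ⟨A, hAΓ, ⟨hout, hne1, hne2⟩, huniq, hpass⟩ := hcc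
  have m1 : ∀ B, minLblP E1 B = hat φ1 B := fun B => g1.minP B
  have m2 : ∀ B, minLblP E2 B = hat φ2 B := fun B => g2.minP B
  refine ⟨A, ⟨?_, ?_, ?_, ?_⟩, ?_, ?_⟩
  · rw [m1]; exact hne1
  · rw [m2]; exact hne2
  · rw [m1, m2]; exact hout.1
  · rw [m1, m2]; exact hout.2
  · intro A' hact
    obtain ⟨hne1', hne2', hdisj', hsub'⟩ := hact
    rw [m1] at hne1' hdisj' hsub'
    rw [m2] at hne2' hdisj' hsub'
    by_cases hA' : A' ∈ Γ
    · exact huniq A' hA' ⟨⟨hdisj', hsub'⟩, hne1', hne2'⟩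
    · exact absurd (g1.hat_min_empty hA') hne1'
  · intro B hBA
    by_cases hB : B ∈ Γ
    · obtain ⟨hin, hiff⟩ := hpass B hB hBA
      exact ⟨by rw [m1, m2]; exact hin.1, by rw [m1, m2]; exact hin.2,
        by rw [m1, m2]; exact hiff⟩
    · refine ⟨?_, ?_, ?_⟩
      · rw [m1, m2, g1.hat_min_empty hB]
        exact Set.disjoint_left.2 (by simp)
      · rw [m1, m2, g1.hat_min_empty hB, g2.hat_min_empty hB]
        simp
      · rw [m1, m2, g1.hat_min_empty hB, g2.hat_min_empty hB]

lemma typing_good [Nonempty P] [Nonempty M] {Γ : Set P} {G : GC P M}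
    {φ Λ : Set (Label P M)} (h : Typing Γ G φ Λ) :
    ∃ E, gsem G = some E ∧ Good Γ φ Λ E := by
  induction h with
  | temp => exact ⟨esEmpty, rfl, good_empty⟩
  | tint hab => exact ⟨esAct _ _ _, by simp [gsem, hab], good_act hab⟩
  | tseq h1 h2 ih1 ih2 =>
      obtain ⟨E1, hg1, g1⟩ := ih1
      obtain ⟨E2, hg2, g2⟩ := ih2
      exact ⟨esSeq E1 E2, by simp [gsem, hg1, hg2], good_seq g1 g2⟩
  | tpar h1 h2 hd ih1 ih2 =>
      obtain ⟨E1, hg1, g1⟩ := ih1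
      obtain ⟨E2, hg2, g2⟩ := ih2
      have hdisj := good_disjoint_lblSet g1 g2 hd
      exact ⟨esTensor E1 E2, by simp [gsem, hg1, hg2, hdisj], good_tensor g1 g2⟩
  | tch h1 h2 hcc ih1 ih2 =>
      obtain ⟨E1, hg1, g1⟩ := ih1
      obtain ⟨E2, hg2, g2⟩ := ih2
      have hwb := good_wb g1 g2 hcc
      exact ⟨esSum E1 E2, by simp [gsem, hg1, hg2, hwb], good_sum g1 g2⟩

end Main

/-- Parallel composition of typable g-choreographies with disjoint participants is
defined: the label sets of `⟦G1⟧` and `⟦G2⟧` are disjoint, so `⟦G1|G2⟧ = ⟦G1⟧⊗⟦G2⟧ ≠ ⊥`;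
moreover the minimal (resp. maximal) labels of `⟦G1|G2⟧↾A` are `(φ1∪φ2)̂(A)`
(resp. `(Λ1∪Λ2)̂(A)`) for every participant `A`. -/
theorem par_defined {P M : Type} [Infinite P] [Infinite M]
    {Γ1 Γ2 : Set P} {G1 G2 : GC P M} {φ1 φ2 Λ1 Λ2 : Set (Label P M)}
    (h1 : Typing Γ1 G1 φ1 Λ1) (h2 : Typing Γ2 G2 φ2 Λ2) (hd : Γ1 ∩ Γ2 = ∅) :
    ∃ E1 E2 : ES P M, gsem G1 = some E1 ∧ gsem G2 = some E2 ∧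
      Disjoint E1.lblSet E2.lblSet ∧
      gsem (GC.par G1 G2) = some (esTensor E1 E2) ∧
      ∀ A : P, ((esTensor E1 E2).proj A).minLbl = hat (φ1 ∪ φ2) A ∧
        ((esTensor E1 E2).proj A).maxLbl = hat (Λ1 ∪ Λ2) A := by
  obtain ⟨E1, hg1, g1⟩ := typing_good h1
  obtain ⟨E2, hg2, g2⟩ := typing_good h2
  have hdisj := good_disjoint_lblSet g1 g2 hd
  have gT := good_tensor g1 g2
  refine ⟨E1, E2, hg1, hg2, hdisj, by simp [gsem, hg1, hg2, hdisj], fun A => ⟨gT.minP A, gT.maxP A⟩⟩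

end Choreo
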